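/- arXiv:2303.13460 — 8 statements merged into one kernel-verified Lean document; each statement's English description precedes it below -/
import Mathlib

section
/- Let A, N_1, …, N_q ∈ ℝ^{n×n}, B ∈ ℝ^{n×m}, C ∈ ℝ^{p×n}, and let K = (k_{ij}) ∈ ℝ^{q×q} be symmetric positive semidefinite. Suppose Q ⪰ 0 is a symmetric positive semidefinite solution of the Riccati equation AᵀQ + QA + Σ_{i,j=1}^q N_iᵀ Q N_j k_{ij} + CᵀC − QBBᵀQ = 0. Then for every symmetric positive semidefinite V with QV = 0 one has: CV = 0, Q · (Σ_{i,j=1}^q N_i V N_jᵀ k_{ij}) = 0, and Q(AV + VAᵀ) = 0; in particular Q · (AV + VAᵀ + Σ_{i,j=1}^q N_i V N_jᵀ k_{ij}) = 0, so the subspace spanned by positive semidefinite matrices annihilated by Q is invariant under the map V ↦ AV + VAᵀ + Σ_{i,j=1}^q N_i V N_jᵀ k_{ij}. -/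
open Matrix BigOperators

lemma trace_tmul_nonneg {a b : ℕ} (X : Matrix (Fin a) (Fin b) ℝ) :
    0 ≤ (Xᵀ * X).trace := by
  simp only [Matrix.trace, Matrix.diag, Matrix.mul_apply, Matrix.transpose_apply]
  exact Finset.sum_nonneg fun j _ => Finset.sum_nonneg fun i _ => mul_self_nonneg _

lemma eq_zero_of_trace_tmul {a b : ℕ} (X : Matrix (Fin a) (Fin b) ℝ)
    (h : (Xᵀ * X).trace = 0) : X = 0 := by
  simp only [Matrix.trace, Matrix.diag, Matrix.mul_apply, Matrix.transpose_apply] at h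
  have h1 := (Finset.sum_eq_zero_iff_of_nonneg
    (fun j _ => Finset.sum_nonneg fun i _ => mul_self_nonneg (X i j))).mp h
  ext i j
  have h2 := (Finset.sum_eq_zero_iff_of_nonneg
    (fun i _ => mul_self_nonneg (X i j))).mp (h1 j (Finset.mem_univ j)) i (Finset.mem_univ i)
  simpa [mul_self_eq_zero] using h2

lemma factor_sum {n q : ℕ} (L : Matrix (Fin q) (Fin q) ℝ)
    (E F : Fin q → Matrix (Fin n) (Fin n) ℝ) (P : Matrix (Fin n) (Fin n) ℝ) :
    ∑ l : Fin q, (∑ i : Fin q, L l i • E i) * P * (∑ j : Fin q, L l j • F j)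
      = ∑ i : Fin q, ∑ j : Fin q, (∑ l : Fin q, L l i * L l j) • (E i * P * F j) := by
  simp only [Matrix.sum_mul, Matrix.mul_sum, Matrix.smul_mul, Matrix.mul_smul, smul_smul,
    Finset.smul_sum]
  conv_rhs => rw [Finset.sum_comm]
  rw [Finset.sum_comm]
  refine Finset.sum_congr rfl fun i _ => ?_
  rw [Finset.sum_comm]
  refine Finset.sum_congr rfl fun j _ => ?_
  rw [Finset.sum_smul]
  exact Finset.sum_congr rfl fun l _ => by rw [mul_comm]
/-- For a positive semidefinite solution `Q` of the observability Riccati equation,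
the cone of positive semidefinite matrices annihilated by `Q` is invariant under
the adjoint generalized Lyapunov operator. -/
theorem stmt_2 {n m p q : ℕ}
    (A : Matrix (Fin n) (Fin n) ℝ) (N : Fin q → Matrix (Fin n) (Fin n) ℝ)
    (B : Matrix (Fin n) (Fin m) ℝ) (C : Matrix (Fin p) (Fin n) ℝ)
    (K : Matrix (Fin q) (Fin q) ℝ) (hK : K.PosSemidef)
    (Q : Matrix (Fin n) (Fin n) ℝ) (hQ : Q.PosSemidef)
    (hric : Aᵀ * Q + Q * A + (∑ i : Fin q, ∑ j : Fin q, K i j • ((N i)ᵀ * Q * N j)) +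
      Cᵀ * C - Q * B * Bᵀ * Q = 0) :
    ∀ V : Matrix (Fin n) (Fin n) ℝ, V.PosSemidef → Q * V = 0 →
      C * V = 0 ∧
      Q * (∑ i : Fin q, ∑ j : Fin q, K i j • (N i * V * (N j)ᵀ)) = 0 ∧
      Q * (A * V + V * Aᵀ) = 0 ∧
      Q * (A * V + V * Aᵀ + ∑ i : Fin q, ∑ j : Fin q, K i j • (N i * V * (N j)ᵀ)) = 0 := by
  classical
  intro V hV hQV
  have hQsym : Qᵀ = Q := by
    rw [← conjTranspose_eq_transpose_of_trivial]; exact hQ.isHermitian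
  have hVsym : Vᵀ = V := by
    rw [← conjTranspose_eq_transpose_of_trivial]; exact hV.isHermitian
  set L := (open scoped MatrixOrder in CFC.sqrt K) with hLdef
  set R := (open scoped MatrixOrder in CFC.sqrt Q) with hRdef
  have hLL : L * L = K := open scoped MatrixOrder in CFC.sqrt_mul_sqrt_self K hK.nonneg
  have hRR : R * R = Q := open scoped MatrixOrder in CFC.sqrt_mul_sqrt_self Q hQ.nonneg
  have hRsym : Rᵀ = R := by
    rw [← conjTranspose_eq_transpose_of_trivial]
    exact open scoped MatrixOrder in (CFC.sqrt_nonneg Q).posSemidef.isHermitian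
  have hLsym : Lᵀ = L := by
    rw [← conjTranspose_eq_transpose_of_trivial]
    exact open scoped MatrixOrder in (CFC.sqrt_nonneg K).posSemidef.isHermitian
  have hKe : ∀ i j, K i j = ∑ l, L l i * L l j := by
    intro i j
    rw [← hLL, Matrix.mul_apply]
    refine Finset.sum_congr rfl fun l _ => ?_
    have : L i l = L l i := by
      have h := congrFun (congrFun hLsym l) i
      simpa [Matrix.transpose_apply] using h
    rw [this]
  set G : Fin q → Matrix (Fin n) (Fin n) ℝ := fun l => ∑ i, L l i • N i with hGdef
  have hGt : ∀ l, (G l)ᵀ = ∑ i, L l i • (N i)ᵀ := by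
    intro l
    simp [hGdef, Matrix.transpose_sum, Matrix.transpose_smul]
  have hT : (∑ i : Fin q, ∑ j : Fin q, K i j • (N i * V * (N j)ᵀ))
      = ∑ l, G l * V * (G l)ᵀ := by
    have h := factor_sum L N (fun j => (N j)ᵀ) V
    rw [show (∑ l, G l * V * (G l)ᵀ)
        = ∑ l, (∑ i, L l i • N i) * V * (∑ j, L l j • (N j)ᵀ) from
      Finset.sum_congr rfl fun l _ => by rw [hGt l], h]
    exact Finset.sum_congr rfl fun i _ => Finset.sum_congr rfl fun j _ => by rw [hKe]
  have hS : (∑ i : Fin q, ∑ j : Fin q, K i j • ((N i)ᵀ * Q * N j))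
      = ∑ l, (G l)ᵀ * Q * G l := by
    have h := factor_sum L (fun i => (N i)ᵀ) N Q
    rw [show (∑ l, (G l)ᵀ * Q * G l)
        = ∑ l, (∑ i, L l i • (N i)ᵀ) * Q * (∑ j, L l j • N j) from
      Finset.sum_congr rfl fun l _ => by rw [hGt l], h]
    exact Finset.sum_congr rfl fun i _ => Finset.sum_congr rfl fun j _ => by rw [hKe]
  have hVQ : V * Q = 0 := by
    have h := congrArg Matrix.transpose hQV
    simpa [Matrix.transpose_mul, hQsym, hVsym] using h
  have hsum : Aᵀ * Q + Q * A + (∑ i : Fin q, ∑ j : Fin q, K i j • ((N i)ᵀ * Q * N j)) +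
      Cᵀ * C = Q * B * Bᵀ * Q := sub_eq_zero.mp hric
  have hmid : (∑ l, (G l)ᵀ * Q * G l) + Cᵀ * C
      = Q * B * Bᵀ * Q - Aᵀ * Q - Q * A := by
    rw [← hS, ← hsum]; abel
  have t1 : V * (Q * B * Bᵀ * Q) * V = 0 := by
    rw [Matrix.mul_assoc, Matrix.mul_assoc, hQV, Matrix.mul_zero, Matrix.mul_zero]
  have t2 : V * (Aᵀ * Q) * V = 0 := by
    rw [Matrix.mul_assoc, Matrix.mul_assoc, hQV, Matrix.mul_zero, Matrix.mul_zero]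
  have t3 : V * (Q * A) * V = 0 := by
    rw [← Matrix.mul_assoc, hVQ, Matrix.zero_mul, Matrix.zero_mul]
  have hE : V * ((∑ l, (G l)ᵀ * Q * G l) + Cᵀ * C) * V = 0 := by
    rw [hmid]
    simp only [Matrix.mul_sub, Matrix.sub_mul]
    rw [t1, t2, t3]
    simp
  have hE2 : (∑ l, V * ((G l)ᵀ * Q * G l) * V) + V * (Cᵀ * C) * V = 0 := by
    rw [← hE]
    simp [Matrix.add_mul, Matrix.mul_add, Matrix.sum_mul, Matrix.mul_sum]
  have hre : ∀ l, V * ((G l)ᵀ * Q * G l) * V = (R * G l * V)ᵀ * (R * G l * V) := by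
    intro l
    rw [Matrix.transpose_mul, Matrix.transpose_mul, hVsym, hRsym, ← hRR]
    simp only [Matrix.mul_assoc]
  have hreC : V * (Cᵀ * C) * V = (C * V)ᵀ * (C * V) := by
    rw [Matrix.transpose_mul, hVsym]
    simp only [Matrix.mul_assoc]
  simp only [hre, hreC] at hE2
  have htr := congrArg Matrix.trace hE2
  rw [Matrix.trace_add, Matrix.trace_sum, Matrix.trace_zero] at htr
  have hsumnn : 0 ≤ ∑ l, ((R * G l * V)ᵀ * (R * G l * V)).trace :=
    Finset.sum_nonneg fun l _ => trace_tmul_nonneg _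
  have hCtr : ((C * V)ᵀ * (C * V)).trace = 0 :=
    le_antisymm (by linarith) (trace_tmul_nonneg _)
  have hstr : ∑ l, ((R * G l * V)ᵀ * (R * G l * V)).trace = 0 := by linarith
  have hCV : C * V = 0 := eq_zero_of_trace_tmul _ hCtr
  have hX : ∀ l, R * G l * V = 0 := by
    intro l
    refine eq_zero_of_trace_tmul _ ?_
    exact (Finset.sum_eq_zero_iff_of_nonneg
      (fun l _ => trace_tmul_nonneg _)).mp hstr l (Finset.mem_univ l)
  have hQGV : ∀ l, Q * G l * V = 0 := by
    intro l
    calc Q * G l * V = R * (R * G l * V) := by rw [← hRR]; simp only [Matrix.mul_assoc]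
    _ = 0 := by rw [hX l, Matrix.mul_zero]
  have g2 : Q * (∑ i : Fin q, ∑ j : Fin q, K i j • (N i * V * (N j)ᵀ)) = 0 := by
    rw [hT, Matrix.mul_sum]
    refine Finset.sum_eq_zero fun l _ => ?_
    calc Q * (G l * V * (G l)ᵀ) = Q * G l * V * (G l)ᵀ := by simp only [Matrix.mul_assoc]
    _ = 0 := by rw [hQGV l, Matrix.zero_mul]
  have eS : (∑ l, (G l)ᵀ * Q * G l) * V = 0 := by
    rw [Matrix.sum_mul]
    refine Finset.sum_eq_zero fun l _ => ?_
    calc (G l)ᵀ * Q * G l * V = (G l)ᵀ * (Q * G l * V) := by simp only [Matrix.mul_assoc]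
    _ = 0 := by rw [hQGV l, Matrix.mul_zero]
  have h4 := congrArg (fun M => M * V) hsum
  simp only [Matrix.add_mul] at h4
  rw [hS] at h4
  have e1 : Aᵀ * Q * V = 0 := by rw [Matrix.mul_assoc, hQV, Matrix.mul_zero]
  have eC : Cᵀ * C * V = 0 := by rw [Matrix.mul_assoc, hCV, Matrix.mul_zero]
  have e5 : Q * B * Bᵀ * Q * V = 0 := by rw [Matrix.mul_assoc, hQV, Matrix.mul_zero]
  rw [e1, eS, eC, e5] at h4
  have hQAV : Q * A * V = 0 := by simpa using h4
  have g3 : Q * (A * V + V * Aᵀ) = 0 := by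
    rw [Matrix.mul_add, ← Matrix.mul_assoc, hQAV, ← Matrix.mul_assoc, hQV,
      Matrix.zero_mul, add_zero]
  exact ⟨hCV, g2, g3, by rw [Matrix.mul_add, g3, g2, add_zero]⟩
end

section
/- Let A, N_1, …, N_q ∈ ℝ^{n×n}, B ∈ ℝ^{n×m}, C ∈ ℝ^{p×n}, and let K = (k_{ij}) ∈ ℝ^{q×q} be symmetric positive semidefinite. The strict Riccati-type inequality AᵀP⁻¹ + P⁻¹A + Σ_{i,j=1}^q N_iᵀ P⁻¹ N_j k_{ij} − CᵀC + P⁻¹BBᵀP⁻¹ ≺ 0 possesses a symmetric positive definite solution P ≻ 0 if and only if there exists a symmetric positive definite X with AᵀX + XA + Σ_{i,j=1}^q N_iᵀ X N_j k_{ij} − CᵀC ≺ 0 (the latter condition being the algebraic characterization of stabilizability of the triple (Aᵀ, Cᵀ, N_iᵀ)). -/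
open Matrix BigOperators

section Aux
variable {n : Type*} [Fintype n] [DecidableEq n]

private lemma transpose_eq_of_herm {M : Matrix n n ℝ} (h : M.IsHermitian) : Mᵀ = M := by
  rw [← conjTranspose_eq_transpose_of_trivial]; exact h.eq

private lemma posDef_smul' {c : ℝ} (hc : 0 < c) {M : Matrix n n ℝ} (hM : M.PosDef) :
    (c • M).PosDef := by
  refine PosDef.of_dotProduct_mulVec_pos ?_ fun x hx => ?_
  · show _ = _
    rw [conjTranspose_smul, star_trivial, hM.1.eq]
  · have := hM.dotProduct_mulVec_pos hx
    simp only [smul_mulVec, dotProduct_smul, smul_eq_mul]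
    positivity

private lemma posSemidef_smul' {c : ℝ} (hc : 0 ≤ c) {M : Matrix n n ℝ} (hM : M.PosSemidef) :
    (c • M).PosSemidef := by
  refine PosSemidef.of_dotProduct_mulVec_nonneg ?_ fun x => ?_
  · show _ = _
    rw [conjTranspose_smul, star_trivial, hM.1.eq]
  · have := hM.dotProduct_mulVec_nonneg x
    simp only [smul_mulVec, dotProduct_smul, smul_eq_mul]
    positivity

open scoped MatrixOrder in
private lemma quad_le_trace_mul {T : Matrix n n ℝ} (hT : T.PosSemidef) (x : n → ℝ) :
    x ⬝ᵥ T *ᵥ x ≤ T.trace * (x ⬝ᵥ x) := by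
  obtain ⟨B, rfl⟩ : ∃ B : Matrix n n ℝ, T = Bᴴ * B :=
    ⟨CFC.sqrt T, by rw [(CFC.sqrt_nonneg T).posSemidef.1.eq, CFC.sqrt_mul_sqrt_self T hT.nonneg]⟩
  rw [conjTranspose_eq_transpose_of_trivial]
  have h1 : x ⬝ᵥ (Bᵀ * B) *ᵥ x = (B *ᵥ x) ⬝ᵥ (B *ᵥ x) := by
    rw [← mulVec_mulVec, dotProduct_mulVec, vecMul_transpose]
  have h2 : (Bᵀ * B).trace = ∑ j, ∑ i, B j i * B j i := by
    rw [Finset.sum_comm]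
    simp [Matrix.trace, Matrix.diag, Matrix.mul_apply]
  rw [h1, h2, Finset.sum_mul]
  simp only [dotProduct, mulVec]
  refine Finset.sum_le_sum fun j _ => ?_
  have h := Finset.sum_mul_sq_le_sq_mul_sq Finset.univ (fun i => B j i) x
  simpa [dotProduct, pow_two] using h

private lemma trace_nonneg' {T : Matrix n n ℝ} (hT : T.PosSemidef) : 0 ≤ T.trace := by
  refine Finset.sum_nonneg fun i _ => ?_
  have := hT.dotProduct_mulVec_nonneg (Pi.single i 1)
  simpa [dotProduct, mulVec, Pi.single_apply, Finset.sum_ite_eq, Finset.sum_ite_eq'] using this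

private lemma posDef_conj' {M Q : Matrix n n ℝ} (hM : M.PosDef) (hQ : IsUnit Q.det) :
    (Qᵀ * M * Q).PosDef := by
  refine PosDef.of_dotProduct_mulVec_pos ?_ fun x hx => ?_
  · have := isHermitian_conjTranspose_mul_mul Q hM.1
    simpa [conjTranspose_eq_transpose_of_trivial] using this
  · have hQx : Q *ᵥ x ≠ 0 := by
      intro h
      exact hx <| Matrix.mulVec_injective_iff_isUnit.mpr
        ((Matrix.isUnit_iff_isUnit_det Q).mpr hQ) (by simpa using h)
    have h := hM.dotProduct_mulVec_pos hQx
    simp only [star_trivial] at h ⊢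
    rwa [← mulVec_mulVec, ← mulVec_mulVec, dotProduct_mulVec, vecMul_transpose]

open scoped MatrixOrder in
private lemma exists_small_sub {D S : Matrix n n ℝ} (hD : D.PosDef) (hS : S.PosSemidef) :
    ∃ c : ℝ, 0 < c ∧ c ≤ 1 ∧ (D - c • S).PosDef := by
  set R := CFC.sqrt D with hRdef
  have hR : R.PosSemidef := (CFC.sqrt_nonneg D).posSemidef
  have hRR : R * R = D := CFC.sqrt_mul_sqrt_self D hD.posSemidef.nonneg
  have hdet : IsUnit R.det := by
    have hd : R.det * R.det = D.det := by rw [← det_mul, hRR]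
    have : D.det ≠ 0 := ne_of_gt hD.det_pos
    exact isUnit_iff_ne_zero.mpr fun h => this (by rw [← hd, h, mul_zero])
  have hRT : Rᵀ = R := transpose_eq_of_herm hR.1
  have hRiT : (R⁻¹)ᵀ = R⁻¹ := by rw [transpose_nonsing_inv, hRT]
  set T := R⁻¹ * S * R⁻¹ with hTdef
  have hT : T.PosSemidef := by
    have := hS.conjTranspose_mul_mul_same R⁻¹
    simpa [conjTranspose_eq_transpose_of_trivial, hRiT] using this
  have ht : 0 ≤ T.trace := trace_nonneg' hT
  set c : ℝ := 1 / (1 + T.trace) with hcdef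
  have hc0 : 0 < c := by positivity
  have hc1 : c ≤ 1 := by
    rw [hcdef, div_le_one (by linarith)]; linarith
  have hcc : c * (1 + T.trace) = 1 := by
    rw [hcdef]; field_simp
  have hone : (1 - c • T).PosDef := by
    refine PosDef.of_dotProduct_mulVec_pos ?_ fun x hx => ?_
    · show _ = _
      rw [conjTranspose_sub, conjTranspose_smul, star_trivial, hT.1.eq, conjTranspose_one]
    · have hxx : 0 < x ⬝ᵥ x := by
        have := Matrix.PosDef.one (n := n) (R := ℝ) |>.dotProduct_mulVec_pos hx
        simpa using this
      have hq := quad_le_trace_mul hT x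
      simp only [sub_mulVec, one_mulVec, smul_mulVec, dotProduct_sub, dotProduct_smul,
        smul_eq_mul, star_trivial]
      nlinarith [mul_le_mul_of_nonneg_left hq (le_of_lt hc0)]
  have key : Rᵀ * (1 - c • T) * R = D - c • S := by
    rw [hRT]
    have h1 : R * T * R = S := by
      rw [hTdef]
      rw [show R * (R⁻¹ * S * R⁻¹) * R = R * R⁻¹ * S * (R⁻¹ * R) by noncomm_ring]
      rw [Matrix.mul_nonsing_inv _ hdet, Matrix.nonsing_inv_mul _ hdet, one_mul, mul_one]
    rw [Matrix.mul_sub, Matrix.sub_mul, Matrix.mul_one, hRR, Matrix.mul_smul, Matrix.smul_mul, h1]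
  exact ⟨c, hc0, hc1, key ▸ posDef_conj' hone hdet⟩

end Aux

/-- The strict reachability Riccati-type inequality has a positive definite
solution iff the dual triple `(Aᵀ, Cᵀ, N_iᵀ)` is stabilizable (algebraic form). -/
theorem stmt_3 {n m p q : ℕ}
    (A : Matrix (Fin n) (Fin n) ℝ) (N : Fin q → Matrix (Fin n) (Fin n) ℝ)
    (B : Matrix (Fin n) (Fin m) ℝ) (C : Matrix (Fin p) (Fin n) ℝ)
    (K : Matrix (Fin q) (Fin q) ℝ) (hK : K.PosSemidef) :
    (∃ P : Matrix (Fin n) (Fin n) ℝ, P.PosDef ∧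
      (-(Aᵀ * P⁻¹ + P⁻¹ * A + (∑ i : Fin q, ∑ j : Fin q, K i j • ((N i)ᵀ * P⁻¹ * N j)) -
          Cᵀ * C + P⁻¹ * B * Bᵀ * P⁻¹)).PosDef) ↔
    (∃ X : Matrix (Fin n) (Fin n) ℝ, X.PosDef ∧
      (-(Aᵀ * X + X * A + (∑ i : Fin q, ∑ j : Fin q, K i j • ((N i)ᵀ * X * N j)) -
          Cᵀ * C)).PosDef) := by
  have hCC : (Cᵀ * C).PosSemidef := by
    simpa [conjTranspose_eq_transpose_of_trivial] using posSemidef_conjTranspose_mul_self C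
  constructor
  · rintro ⟨P, hP, hPD⟩
    refine ⟨P⁻¹, hP.inv, ?_⟩
    have hsym : P⁻¹ᵀ = P⁻¹ := transpose_eq_of_herm hP.inv.1
    have hpsd : (P⁻¹ * B * Bᵀ * P⁻¹).PosSemidef := by
      have := posSemidef_conjTranspose_mul_self (Bᵀ * P⁻¹)
      simpa [conjTranspose_eq_transpose_of_trivial, transpose_mul, hsym, Matrix.mul_assoc]
        using this
    have key : (-(Aᵀ * P⁻¹ + P⁻¹ * A + (∑ i : Fin q, ∑ j : Fin q, K i j • ((N i)ᵀ * P⁻¹ * N j)) -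
          Cᵀ * C))
        = (-(Aᵀ * P⁻¹ + P⁻¹ * A + (∑ i : Fin q, ∑ j : Fin q, K i j • ((N i)ᵀ * P⁻¹ * N j)) -
          Cᵀ * C + P⁻¹ * B * Bᵀ * P⁻¹)) + P⁻¹ * B * Bᵀ * P⁻¹ := by abel
    rw [key]
    exact hPD.add_posSemidef hpsd
  · rintro ⟨X, hX, hXD⟩
    have hXsym : Xᵀ = X := transpose_eq_of_herm hX.1
    have hSpsd : (X * B * Bᵀ * X).PosSemidef := by
      have := posSemidef_conjTranspose_mul_self (Bᵀ * X)
      simpa [conjTranspose_eq_transpose_of_trivial, transpose_mul, hXsym, Matrix.mul_assoc]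
        using this
    obtain ⟨c, hc0, hc1, hc⟩ := exists_small_sub hXD hSpsd
    refine ⟨(c • X)⁻¹, (posDef_smul' hc0 hX).inv, ?_⟩
    have hinv : ((c • X)⁻¹)⁻¹ = c • X :=
      Matrix.nonsing_inv_nonsing_inv _ (isUnit_iff_ne_zero.mpr (ne_of_gt (posDef_smul' hc0 hX).det_pos))
    rw [hinv]
    have key : (-(Aᵀ * (c • X) + (c • X) * A +
          (∑ i : Fin q, ∑ j : Fin q, K i j • ((N i)ᵀ * (c • X) * N j)) -
          Cᵀ * C + (c • X) * B * Bᵀ * (c • X)))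
        = c • ((-(Aᵀ * X + X * A + (∑ i : Fin q, ∑ j : Fin q, K i j • ((N i)ᵀ * X * N j)) -
            Cᵀ * C)) - c • (X * B * Bᵀ * X)) + (1 - c) • (Cᵀ * C) := by
      have hsum : (∑ i : Fin q, ∑ j : Fin q, K i j • ((N i)ᵀ * (c • X) * N j))
          = c • (∑ i : Fin q, ∑ j : Fin q, K i j • ((N i)ᵀ * X * N j)) := by
        rw [Finset.smul_sum]
        refine Finset.sum_congr rfl fun i _ => ?_
        rw [Finset.smul_sum]
        refine Finset.sum_congr rfl fun j _ => ?_
        rw [Matrix.mul_smul, Matrix.smul_mul, smul_comm]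
      rw [hsum]
      simp only [Matrix.mul_smul, Matrix.smul_mul]
      module
    rw [key]
    exact (posDef_smul' hc0 hc).add_posSemidef (posSemidef_smul' (by linarith) hCC)
end

section
/- Let A, N_1, …, N_q ∈ ℝ^{n×n} and let K = (k_{ij}) ∈ ℝ^{q×q} be symmetric positive semidefinite. Define the linear map on symmetric n×n matrices T(X) = AᵀX + XA + Σ_{i,j=1}^q N_iᵀ X N_j k_{ij}. Then: (i) the map Π_N(X) = Σ_{i,j=1}^q N_iᵀ X N_j k_{ij} is positive, i.e., X ⪰ 0 implies Π_N(X) ⪰ 0; and (ii) T is resolvent positive: there exists α₀ ∈ ℝ such that for every α > α₀ the map α·id − T (on the space of symmetric n×n matrices) is invertible and maps the cone of positive semidefinite matrices onto a subset of itself under its inverse, i.e., (α·id − T)⁻¹(X) ⪰ 0 whenever X ⪰ 0. -/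
open Matrix BigOperators
open scoped Matrix.Norms.L2Operator

variable {n q : ℕ}

noncomputable def PiN (N : Fin q → Matrix (Fin n) (Fin n) ℝ) (K : Matrix (Fin q) (Fin q) ℝ)
    (X : Matrix (Fin n) (Fin n) ℝ) : Matrix (Fin n) (Fin n) ℝ :=
  ∑ i : Fin q, ∑ j : Fin q, K i j • ((N i)ᵀ * X * N j)

lemma PiN_posSemidef (N : Fin q → Matrix (Fin n) (Fin n) ℝ) {K : Matrix (Fin q) (Fin q) ℝ}
    (hK : K.PosSemidef) {X : Matrix (Fin n) (Fin n) ℝ} (hX : X.PosSemidef) :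
    (PiN N K X).PosSemidef := by
  obtain ⟨B, hB⟩ : ∃ B : Matrix (Fin q) (Fin q) ℝ, K = Bᵀ * B := by
    open scoped MatrixOrder in
    obtain ⟨B, hB⟩ := CStarAlgebra.nonneg_iff_eq_star_mul_self.mp hK.nonneg
    exact ⟨B, by simpa [Matrix.star_eq_conjTranspose, Matrix.conjTranspose_eq_transpose_of_trivial] using hB⟩
  have expand : ∀ l : Fin q, (∑ i : Fin q, B l i • N i)ᵀ * X * (∑ j : Fin q, B l j • N j)
      = ∑ i : Fin q, ∑ j : Fin q, (B l i * B l j) • ((N i)ᵀ * X * (N j)) := by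
    intro l
    rw [Matrix.transpose_sum]
    simp only [Matrix.transpose_smul, Matrix.sum_mul, Matrix.mul_sum, Matrix.smul_mul,
      Matrix.mul_smul, smul_smul, Finset.smul_sum]
    rw [Finset.sum_comm]
    exact Finset.sum_congr rfl fun i _ => Finset.sum_congr rfl fun j _ => by rw [mul_comm]
  have key : PiN N K X = ∑ l : Fin q,
      ((∑ i : Fin q, B l i • N i)ᵀ * X * (∑ j : Fin q, B l j • N j)) := by
    simp only [expand]
    rw [Finset.sum_comm]
    refine Finset.sum_congr rfl fun i _ => ?_
    rw [Finset.sum_comm]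
    refine Finset.sum_congr rfl fun j _ => ?_
    rw [← Finset.sum_smul]
    congr 1
    rw [hB]
    simp [Matrix.mul_apply]
  rw [key]
  refine Finset.sum_induction _ _ (fun a b ha hb => ha.add hb) Matrix.PosSemidef.zero ?_
  intro l _
  have := hX.conjTranspose_mul_mul_same (∑ j : Fin q, B l j • N j)
  simpa [Matrix.conjTranspose_eq_transpose_of_trivial] using this

lemma PiN_add (N : Fin q → Matrix (Fin n) (Fin n) ℝ) (K : Matrix (Fin q) (Fin q) ℝ)
    (X Y : Matrix (Fin n) (Fin n) ℝ) : PiN N K (X + Y) = PiN N K X + PiN N K Y := by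
  simp [PiN, Matrix.mul_add, Matrix.add_mul, smul_add, Finset.sum_add_distrib]

lemma PiN_smul (N : Fin q → Matrix (Fin n) (Fin n) ℝ) (K : Matrix (Fin q) (Fin q) ℝ)
    (c : ℝ) (X : Matrix (Fin n) (Fin n) ℝ) : PiN N K (c • X) = c • PiN N K X := by
  simp [PiN, Matrix.mul_smul, Matrix.smul_mul, Finset.smul_sum, smul_smul, mul_comm]

lemma PiN_sub (N : Fin q → Matrix (Fin n) (Fin n) ℝ) (K : Matrix (Fin q) (Fin q) ℝ)
    (X Y : Matrix (Fin n) (Fin n) ℝ) : PiN N K (X - Y) = PiN N K X - PiN N K Y := by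
  simp [PiN, Matrix.mul_sub, Matrix.sub_mul, smul_sub, Finset.sum_sub_distrib]

lemma PiN_neg (N : Fin q → Matrix (Fin n) (Fin n) ℝ) (K : Matrix (Fin q) (Fin q) ℝ)
    (X : Matrix (Fin n) (Fin n) ℝ) : PiN N K (-X) = -PiN N K X := by
  have := PiN_sub N K 0 X
  simpa [PiN] using this

lemma PiN_isSymm (N : Fin q → Matrix (Fin n) (Fin n) ℝ) {K : Matrix (Fin q) (Fin q) ℝ}
    (hK : K.IsSymm) {X : Matrix (Fin n) (Fin n) ℝ} (hX : X.IsSymm) : (PiN N K X).IsSymm := by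
  unfold PiN
  rw [Matrix.IsSymm]
  simp only [Matrix.transpose_sum, Matrix.transpose_smul, Matrix.transpose_mul,
    Matrix.transpose_transpose, Matrix.mul_assoc, hX.eq]
  rw [Finset.sum_comm]
  exact Finset.sum_congr rfl fun i _ => Finset.sum_congr rfl fun j _ => by
    rw [hK.apply j i]

/-- `X - c•1` is PSD when `c` is below all eigenvalues of the hermitian matrix `X`. -/
lemma sub_smul_one_posSemidef {X : Matrix (Fin n) (Fin n) ℝ} (hX : X.IsHermitian) {c : ℝ}
    (hc : ∀ i, c ≤ hX.eigenvalues i) : (X - c • 1).PosSemidef := by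
  classical
  have hU : (hX.eigenvectorUnitary : Matrix (Fin n) (Fin n) ℝ) *
      star (hX.eigenvectorUnitary : Matrix (Fin n) (Fin n) ℝ) = 1 :=
    Matrix.mem_unitaryGroup_iff.mp hX.eigenvectorUnitary.2
  have hrep : X - c • 1 = (hX.eigenvectorUnitary : Matrix (Fin n) (Fin n) ℝ) *
      Matrix.diagonal (fun i => hX.eigenvalues i - c) *
      star (hX.eigenvectorUnitary : Matrix (Fin n) (Fin n) ℝ) := by
    have hd : Matrix.diagonal (fun i => hX.eigenvalues i - c)
        = Matrix.diagonal (RCLike.ofReal ∘ hX.eigenvalues) - c • (1 : Matrix (Fin n) (Fin n) ℝ) := by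
      ext i j
      rcases eq_or_ne i j with rfl | h
      · simp [Matrix.one_apply_eq, RCLike.ofReal_real_eq_id]
      · simp [Matrix.diagonal_apply_ne _ h, Matrix.one_apply_ne h]
    have hs := hX.spectral_theorem
    rw [Unitary.conjStarAlgAut_apply] at hs
    rw [hd, Matrix.mul_sub, Matrix.sub_mul, ← hs]
    congr 1
    rw [Matrix.mul_smul, Matrix.smul_mul, Matrix.mul_one, hU]
  rw [hrep]
  have hdiag : (Matrix.diagonal (fun i => hX.eigenvalues i - c)).PosSemidef :=
    Matrix.posSemidef_diagonal_iff.mpr fun i => sub_nonneg.mpr (hc i)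
  have := hdiag.mul_mul_conjTranspose_same (hX.eigenvectorUnitary : Matrix (Fin n) (Fin n) ℝ)
  simpa [Matrix.star_eq_conjTranspose] using this

lemma key_pos (A : Matrix (Fin n) (Fin n) ℝ) (N : Fin q → Matrix (Fin n) (Fin n) ℝ)
    {K : Matrix (Fin q) (Fin q) ℝ} (hK : K.PosSemidef)
    {α : ℝ} (hα : 2 * ‖A‖ + ‖PiN N K (1 : Matrix (Fin n) (Fin n) ℝ)‖ < α)
    {X Y : Matrix (Fin n) (Fin n) ℝ} (hX : X.IsSymm) (hY : Y.PosSemidef)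
    (hE : α • X - (Aᵀ * X + X * A + PiN N K X) = Y) : X.PosSemidef := by
  classical
  have hXh : X.IsHermitian := by
    rwa [Matrix.IsHermitian, Matrix.conjTranspose_eq_transpose_of_trivial]
  apply hXh.posSemidef_iff_eigenvalues_nonneg.mpr
  intro i
  by_contra hneg
  push_neg at hneg
  obtain ⟨i₀, -, hmin⟩ := Finset.exists_min_image Finset.univ hXh.eigenvalues
    ⟨i, Finset.mem_univ i⟩
  set lam := hXh.eigenvalues i₀ with hlam
  have hlneg : lam < 0 := lt_of_le_of_lt (hmin i (Finset.mem_univ i)) hneg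
  set ve : EuclideanSpace ℝ (Fin n) := hXh.eigenvectorBasis i₀ with hve
  set v : Fin n → ℝ := ⇑ve with hvdef
  have hv : X *ᵥ v = lam • v := hXh.mulVec_eigenvectorBasis i₀
  have hnv : ‖ve‖ = 1 := hXh.eigenvectorBasis.orthonormal.1 i₀
  have hvv : v ⬝ᵥ v = 1 := by
    have h1 : (inner ℝ ve ve : ℝ) = dotProduct (star v) v :=
      EuclideanSpace.inner_eq_star_dotProduct ve ve
    have h2 : (inner ℝ ve ve : ℝ) = 1 := by
      rw [real_inner_self_eq_norm_sq, hnv]; norm_num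
    rw [← h2, h1]
    simp
  -- inner products with A and PiN N K 1
  set a : ℝ := v ⬝ᵥ (A *ᵥ v) with ha_def
  set p1 : ℝ := v ⬝ᵥ (PiN N K 1 *ᵥ v) with hp1_def
  have dot_le : ∀ M : Matrix (Fin n) (Fin n) ℝ, v ⬝ᵥ (M *ᵥ v) ≤ ‖M‖ := by
    intro M
    have h1 : v ⬝ᵥ (M *ᵥ v) = (inner ℝ ve ((EuclideanSpace.equiv (Fin n) ℝ).symm (M *ᵥ v)) : ℝ) := by
      rw [EuclideanSpace.inner_eq_star_dotProduct]
      simp [dotProduct_comm, hvdef]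
    have h2 := M.l2_opNorm_mulVec ve
    have h3 := real_inner_le_norm ve ((EuclideanSpace.equiv (Fin n) ℝ).symm (M *ᵥ v))
    rw [h1]
    calc (inner ℝ ve ((EuclideanSpace.equiv (Fin n) ℝ).symm (M *ᵥ v)) : ℝ)
        ≤ ‖ve‖ * ‖(EuclideanSpace.equiv (Fin n) ℝ).symm (M *ᵥ v)‖ := h3
      _ ≤ ‖ve‖ * (‖M‖ * ‖ve‖) := by
          apply mul_le_mul_of_nonneg_left h2 (norm_nonneg _)
      _ = ‖M‖ := by rw [hnv]; ring
  have ha : a ≤ ‖A‖ := dot_le A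
  have hp1 : p1 ≤ ‖PiN N K 1‖ := dot_le _
  -- quadratic form of the equation at v
  have hq := congrArg (fun M : Matrix (Fin n) (Fin n) ℝ => v ⬝ᵥ (M *ᵥ v)) hE
  simp only [Matrix.sub_mulVec, Matrix.add_mulVec, dotProduct_sub,
    dotProduct_add, Matrix.smul_mulVec, dotProduct_smul,
    ← Matrix.mulVec_mulVec] at hq
  -- compute each term
  have t1 : v ⬝ᵥ (Aᵀ *ᵥ (X *ᵥ v)) = lam * a := by
    rw [hv, Matrix.mulVec_smul, dotProduct_smul, smul_eq_mul]
    congr 1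
    rw [Matrix.dotProduct_mulVec, Matrix.vecMul_transpose, dotProduct_comm]
  have t2 : v ⬝ᵥ (X *ᵥ (A *ᵥ v)) = lam * a := by
    rw [Matrix.dotProduct_mulVec]
    have : v ᵥ* X = lam • v := by
      rw [← hX.eq, Matrix.vecMul_transpose, hv]
    rw [this, smul_dotProduct, smul_eq_mul]
  have hyq : (0 : ℝ) ≤ v ⬝ᵥ (Y *ᵥ v) := by simpa using hY.dotProduct_mulVec_nonneg v
  have hXlam : (X - lam • 1).PosSemidef := sub_smul_one_posSemidef hXh
    (fun j => hmin j (Finset.mem_univ j))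
  have hPpos := PiN_posSemidef N hK hXlam
  have hPquad : (0:ℝ) ≤ v ⬝ᵥ (PiN N K X *ᵥ v) - lam * p1 := by
    have h0 : (0:ℝ) ≤ v ⬝ᵥ (PiN N K (X - lam • 1) *ᵥ v) := by simpa using hPpos.dotProduct_mulVec_nonneg v
    rw [PiN_sub, PiN_smul] at h0
    simpa [Matrix.sub_mulVec, Matrix.smul_mulVec, dotProduct_sub,
      dotProduct_smul, smul_eq_mul, mul_comm] using h0
  -- assemble
  have hxv : v ⬝ᵥ (X *ᵥ v) = lam := by rw [hv, dotProduct_smul, smul_eq_mul, hvv, mul_one]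
  rw [hxv, t1, t2] at hq
  have e1 : lam * ‖A‖ ≤ lam * a := mul_le_mul_of_nonpos_left ha hlneg.le
  have e2 : lam * ‖PiN N K 1‖ ≤ lam * p1 := mul_le_mul_of_nonpos_left hp1 hlneg.le
  have e3 : lam * α < lam * (2 * ‖A‖ + ‖PiN N K 1‖) := by
    exact mul_lt_mul_of_neg_left hα hlneg
  rw [smul_eq_mul] at hq
  nlinarith [hq, hyq, hPquad, e1, e2, e3]

lemma psd_neg_psd_eq_zero {X : Matrix (Fin n) (Fin n) ℝ} (h1 : X.PosSemidef)
    (h2 : (-X).PosSemidef) : X = 0 := by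
  classical
  have hzero : ∀ i, h1.isHermitian.eigenvalues i = 0 := by
    intro i
    refine le_antisymm ?_ (h1.eigenvalues_nonneg i)
    have heq := h1.isHermitian.eigenvalues_eq i
    set v : Fin n → ℝ := ⇑(h1.isHermitian.eigenvectorBasis i) with hvdef
    have hq := h2.dotProduct_mulVec_nonneg v
    simp only [Matrix.neg_mulVec, dotProduct_neg, star_trivial] at hq
    have : h1.isHermitian.eigenvalues i = v ⬝ᵥ (X *ᵥ v) := by
      simpa using heq
    linarith [this ▸ (neg_nonneg.mp (by linarith [hq]) : v ⬝ᵥ (X *ᵥ v) ≤ 0)]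
  have hdiag : Matrix.diagonal (RCLike.ofReal ∘ h1.isHermitian.eigenvalues)
      = (0 : Matrix (Fin n) (Fin n) ℝ) := by
    ext i j
    rcases eq_or_ne i j with rfl | h
    · simp [hzero i]
    · simp [Matrix.diagonal_apply_ne _ h]
  rw [h1.isHermitian.spectral_theorem, hdiag]
  simp

/-- The map `Π_N` is positive and the generalized Lyapunov operator
`T(X) = AᵀX + XA + Σ_{i,j} N_iᵀ X N_j k_{ij}` is resolvent positive on the space
of symmetric matrices. -/
theorem stmt_5 {n q : ℕ}
    (A : Matrix (Fin n) (Fin n) ℝ) (N : Fin q → Matrix (Fin n) (Fin n) ℝ)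
    (K : Matrix (Fin q) (Fin q) ℝ) (hK : K.PosSemidef) :
    (∀ X : Matrix (Fin n) (Fin n) ℝ, X.PosSemidef →
      (∑ i : Fin q, ∑ j : Fin q, K i j • ((N i)ᵀ * X * N j)).PosSemidef) ∧
    (∃ α₀ : ℝ, ∀ α : ℝ, α > α₀ →
      (∀ Y : Matrix (Fin n) (Fin n) ℝ, Y.IsSymm →
        ∃! X : Matrix (Fin n) (Fin n) ℝ, X.IsSymm ∧
          α • X - (Aᵀ * X + X * A + ∑ i : Fin q, ∑ j : Fin q, K i j • ((N i)ᵀ * X * N j)) = Y) ∧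
      (∀ X Y : Matrix (Fin n) (Fin n) ℝ, X.IsSymm → Y.PosSemidef →
        α • X - (Aᵀ * X + X * A + ∑ i : Fin q, ∑ j : Fin q, K i j • ((N i)ᵀ * X * N j)) = Y →
        X.PosSemidef)) := by
  have hKsymm : K.IsSymm := by
    rw [Matrix.IsSymm, ← Matrix.conjTranspose_eq_transpose_of_trivial]
    exact hK.isHermitian
  refine ⟨fun X hX => PiN_posSemidef N hK hX, 2 * ‖A‖ + ‖PiN N K (1 : Matrix (Fin n) (Fin n) ℝ)‖,
    fun α hα => ?_⟩
  have hTsymm : ∀ X : Matrix (Fin n) (Fin n) ℝ, X.IsSymm →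
      (α • X - (Aᵀ * X + X * A + PiN N K X)).IsSymm := by
    intro X hXs
    have h1 : (Aᵀ * X + X * A).IsSymm := by
      rw [Matrix.IsSymm]
      rw [Matrix.transpose_add, Matrix.transpose_mul, Matrix.transpose_mul,
        Matrix.transpose_transpose, hXs.eq, add_comm]
    exact (hXs.smul α).sub (h1.add (PiN_isSymm N hKsymm hXs))
  constructor
  · -- existence and uniqueness
    intro Y hY
    set Sym : Submodule ℝ (Matrix (Fin n) (Fin n) ℝ) :=
      { carrier := {X | X.IsSymm}
        add_mem' := fun ha hb => ha.add hb
        zero_mem' := Matrix.isSymm_zero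
        smul_mem' := fun c {X} h => h.smul c } with hSym
    have hmem : ∀ X : Matrix (Fin n) (Fin n) ℝ, X ∈ Sym ↔ X.IsSymm := fun X => Iff.rfl
    let Φ : Sym →ₗ[ℝ] Sym :=
      { toFun := fun X => ⟨α • (X : Matrix (Fin n) (Fin n) ℝ)
          - (Aᵀ * X + X * A + PiN N K X), hTsymm _ X.2⟩
        map_add' := by
          intro X Z
          apply Subtype.ext
          simp only [Submodule.coe_add, PiN_add, Matrix.mul_add, Matrix.add_mul, smul_add]
          abel
        map_smul' := by
          intro c X
          apply Subtype.ext
          simp only [SetLike.val_smul, PiN_smul, Matrix.mul_smul, Matrix.smul_mul,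
            RingHom.id_apply, smul_sub, smul_add, smul_smul, mul_comm] }
    have hinj : Function.Injective Φ := by
      rw [← LinearMap.ker_eq_bot]
      rw [Submodule.eq_bot_iff]
      rintro ⟨X, hXs⟩ hX0
      have h0 : α • X - (Aᵀ * X + X * A + PiN N K X) = 0 :=
        congrArg Subtype.val hX0
      have hpos : X.PosSemidef := key_pos A N hK hα hXs Matrix.PosSemidef.zero h0
      have h0' : α • (-X) - (Aᵀ * (-X) + (-X) * A + PiN N K (-X)) = 0 := by
        rw [PiN_neg, Matrix.mul_neg, Matrix.neg_mul, smul_neg]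
        have habel : -(α • X) - (-(Aᵀ * X) + -(X * A) + -(PiN N K X))
            = -(α • X - (Aᵀ * X + X * A + PiN N K X)) := by abel
        rw [habel, h0, neg_zero]
      have hneg : (-X).PosSemidef :=
        key_pos A N hK hα (hXs.neg) Matrix.PosSemidef.zero h0'
      exact Subtype.ext (psd_neg_psd_eq_zero hpos hneg)
    have hsurj : Function.Surjective Φ := LinearMap.injective_iff_surjective.mp hinj
    obtain ⟨Xs, hXs⟩ := hsurj ⟨Y, hY⟩
    refine ⟨Xs.1, ⟨Xs.2, congrArg Subtype.val hXs⟩, ?_⟩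
    rintro X' ⟨hs', he'⟩
    have hΦ : Φ ⟨X', hs'⟩ = ⟨Y, hY⟩ := Subtype.ext he'
    exact congrArg Subtype.val (hinj (hΦ.trans hXs.symm))
  · intro X Y hXs hY hE
    exact key_pos A N hK hα hXs hY hE
end

section
/- Let P, Q ∈ ℝ^{n×n} be symmetric positive definite matrices. Then there exists an invertible matrix S ∈ ℝ^{n×n} such that S P Sᵀ = (Sᵀ)⁻¹ Q S⁻¹ = Σ, where Σ = diag(σ₁, …, σ_n) is diagonal with σ₁ ≥ σ₂ ≥ … ≥ σ_n > 0, and the numbers σ₁², …, σ_n² are exactly the eigenvalues of the product PQ (with multiplicity). -/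
open Matrix BigOperators Polynomial

lemma my_charpoly_conj {n : ℕ} (M A : Matrix (Fin n) (Fin n) ℝ) (hM : IsUnit M.det) :
    (M * A * M⁻¹).charpoly = A.charpoly := by
  have hmm : M * M⁻¹ = 1 := Matrix.mul_nonsing_inv M hM
  have key : charmatrix (M * A * M⁻¹) =
      (C : ℝ →+* ℝ[X]).mapMatrix M * charmatrix A * (C : ℝ →+* ℝ[X]).mapMatrix M⁻¹ := by
    unfold charmatrix
    rw [mul_sub, sub_mul]
    congr 1
    · rw [← Matrix.scalar_commute (X : ℝ[X]) (fun r => Commute.all _ _) _]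
      rw [mul_assoc, ← _root_.map_mul C.mapMatrix, hmm, _root_.map_one C.mapMatrix, mul_one]
    · rw [← _root_.map_mul C.mapMatrix, ← _root_.map_mul C.mapMatrix]
  rw [Matrix.charpoly, Matrix.charpoly, key, det_mul, det_mul, mul_comm, ← mul_assoc,
    ← det_mul, ← _root_.map_mul C.mapMatrix, Matrix.nonsing_inv_mul M hM, _root_.map_one C.mapMatrix, det_one, one_mul]

lemma my_charpoly_diagonal {n : ℕ} (d : Fin n → ℝ) :
    (diagonal d).charpoly = ∏ i, (X - C (d i)) := by
  have h : charmatrix (diagonal d) = diagonal (fun i => X - C (d i)) := by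
    ext i j
    by_cases h : i = j
    · subst h; simp
    · simp [h, diagonal_apply_ne _ h]
  rw [Matrix.charpoly, h, det_diagonal]

/-- Simultaneous balancing of two symmetric positive definite Gramians: there is
an invertible `S` making `S P Sᵀ` and `(Sᵀ)⁻¹ Q S⁻¹` equal to the same positive
diagonal matrix whose squared entries are the eigenvalues of `P Q` (with
multiplicity, encoded via the characteristic polynomial). -/
theorem stmt_7 {n : ℕ} (P Q : Matrix (Fin n) (Fin n) ℝ)
    (hP : P.PosDef) (hQ : Q.PosDef) :
    ∃ S : Matrix (Fin n) (Fin n) ℝ, IsUnit S ∧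
    ∃ σ : Fin n → ℝ,
      (∀ i j : Fin n, i ≤ j → σ j ≤ σ i) ∧
      (∀ i : Fin n, 0 < σ i) ∧
      S * P * Sᵀ = Matrix.diagonal σ ∧
      (Sᵀ)⁻¹ * Q * S⁻¹ = Matrix.diagonal σ ∧
      (P * Q).charpoly = ∏ i : Fin n, (X - C (σ i ^ 2)) := by
  classical
  set M := (open scoped MatrixOrder in CFC.sqrt P) with hMdef
  have hMsd : M.PosSemidef := open scoped MatrixOrder in
    Matrix.nonneg_iff_posSemidef.mp (CFC.sqrt_nonneg P)
  have hMM : M * M = P := open scoped MatrixOrder in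
    CFC.sqrt_mul_sqrt_self P (Matrix.nonneg_iff_posSemidef.mpr hP.posSemidef)
  have hMT : Mᵀ = M := by
    have := hMsd.1
    rwa [Matrix.IsHermitian, conjTranspose_eq_transpose_of_trivial] at this
  have hMdet : IsUnit M.det := by
    have h2 : M.det * M.det = P.det := by rw [← det_mul, hMM]
    have := hP.det_pos
    refine isUnit_iff_ne_zero.mpr fun h => ?_
    rw [h, mul_zero] at h2
    exact this.ne' h2.symm
  have hMinv : M * M⁻¹ = 1 := Matrix.mul_nonsing_inv M hMdet
  have hMinv' : M⁻¹ * M = 1 := Matrix.nonsing_inv_mul M hMdet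
  -- A = M Q M is positive definite
  set A := M * Q * M with hAdef
  have hA : A.PosDef := by
    refine Matrix.PosDef.of_dotProduct_mulVec_pos ?_ ?_
    · show Aᴴ = A
      rw [hAdef, conjTranspose_mul, conjTranspose_mul, hMsd.1, hQ.1, mul_assoc]
    · intro x hx
      have hMx : M *ᵥ x ≠ 0 := by
        intro h
        have : Function.Injective (M.mulVec) := (Matrix.mulVec_injective_iff_isUnit.mpr
          ((Matrix.isUnit_iff_isUnit_det M).mpr hMdet))
        exact hx (this (by simpa using h))
      have := hQ.dotProduct_mulVec_pos hMx
      have hMH : Mᴴ = M := hMsd.1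
      calc (0:ℝ) < dotProduct (star (M *ᵥ x)) (Q *ᵥ (M *ᵥ x)) := this
        _ = dotProduct (star x) (A *ᵥ x) := by
            simp only [hAdef, star_mulVec, hMH, dotProduct_mulVec, vecMul_vecMul, mul_assoc]
  have hAH : A.IsHermitian := hA.isHermitian
  set μ := hAH.eigenvalues with hμdef
  have hμpos : ∀ i, 0 < μ i := hA.eigenvalues_pos
  set U : Matrix (Fin n) (Fin n) ℝ := (hAH.eigenvectorUnitary : Matrix (Fin n) (Fin n) ℝ)
    with hUdef
  have hUst : star U = Uᵀ := by
    rw [Matrix.star_eq_conjTranspose, conjTranspose_eq_transpose_of_trivial]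
  have hU1 : Uᵀ * U = 1 := by
    rw [← hUst]; exact Matrix.mem_unitaryGroup_iff'.mp hAH.eigenvectorUnitary.2
  have hU2 : U * Uᵀ = 1 := by
    rw [← hUst]; exact Matrix.mem_unitaryGroup_iff.mp hAH.eigenvectorUnitary.2
  have hspec : A = U * diagonal μ * Uᵀ := by
    have := hAH.spectral_theorem
    rwa [Unitary.conjStarAlgAut_apply, hUst] at this
  -- sort eigenvalues decreasingly
  set e : Equiv.Perm (Fin n) := Fin.revPerm.trans (Tuple.sort μ) with hedef
  set τ : Fin n → ℝ := μ ∘ e with hτdef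
  have hτpos : ∀ i, 0 < τ i := fun i => hμpos _
  have hτanti : ∀ i j : Fin n, i ≤ j → τ j ≤ τ i := by
    intro i j hij
    have hmono := Tuple.monotone_sort μ
    have : (j : Fin n).rev ≤ (i : Fin n).rev := Fin.rev_le_rev.mpr hij
    exact hmono this
  set σ : Fin n → ℝ := fun i => Real.sqrt (τ i) with hσdef
  set s : Fin n → ℝ := fun i => Real.sqrt (σ i) with hsdef
  have hσpos : ∀ i, 0 < σ i := fun i => Real.sqrt_pos.mpr (hτpos i)
  have hspos : ∀ i, 0 < s i := fun i => Real.sqrt_pos.mpr (hσpos i)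
  have hss : ∀ i, s i * s i = σ i := fun i => Real.mul_self_sqrt (hσpos i).le
  have hσσ : ∀ i, σ i * σ i = τ i := fun i => Real.mul_self_sqrt (hτpos i).le
  -- V = U with columns permuted by e
  set V : Matrix (Fin n) (Fin n) ℝ := U.submatrix id e with hVdef
  have hVT : Vᵀ = Uᵀ.submatrix e id := by rw [hVdef, transpose_submatrix]
  have hV1 : Vᵀ * V = 1 := by
    rw [hVdef, hVT, ← Matrix.submatrix_mul Uᵀ U ⇑e id ⇑e Function.bijective_id, hU1,
      Matrix.submatrix_one_equiv e]
  have hV2 : V * Vᵀ = 1 := by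
    rw [hVdef, hVT, ← Matrix.submatrix_mul U Uᵀ id ⇑e id e.bijective, hU2,
      Matrix.submatrix_id_id]
  have hdiagsub : (diagonal μ).submatrix e e = diagonal τ := by
    rw [Matrix.submatrix_diagonal μ e e.injective, hτdef]
  have hVAV : Vᵀ * A * V = diagonal τ := by
    have h1 : Vᵀ * A * V = (Uᵀ * A * U).submatrix e e := by
      rw [hVdef, hVT, Matrix.submatrix_mul (Uᵀ * A) U ⇑e id ⇑e Function.bijective_id,
        Matrix.submatrix_mul Uᵀ A ⇑e id id Function.bijective_id, Matrix.submatrix_id_id]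
    have h2 : Uᵀ * A * U = diagonal μ := by
      rw [hspec]
      simp only [← mul_assoc]
      rw [hU1, one_mul, mul_assoc, hU1, mul_one]
    rw [h1, h2, hdiagsub]
  have hAVV : A = V * diagonal τ * Vᵀ := by
    rw [← hVAV]
    simp only [← mul_assoc]
    rw [hV2, one_mul, mul_assoc, hV2, mul_one]
  -- the balancing transformation and its inverse
  set s' : Fin n → ℝ := fun i => (s i)⁻¹ with hs'def
  set S : Matrix (Fin n) (Fin n) ℝ := diagonal s * Vᵀ * M⁻¹ with hSdef
  set T : Matrix (Fin n) (Fin n) ℝ := M * V * diagonal s' with hTdef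
  have hST : S * T = 1 := by
    rw [hSdef, hTdef]
    simp only [← mul_assoc]
    rw [mul_assoc (diagonal s * Vᵀ) M⁻¹ M, hMinv', mul_one, mul_assoc (diagonal s) Vᵀ V, hV1,
      mul_one, diagonal_mul_diagonal]
    have : (fun i => s i * s' i) = fun _ => (1:ℝ) := by
      funext i; exact mul_inv_cancel₀ (hspos i).ne'
    rw [this, diagonal_one]
  have hSunit : IsUnit S := by
    rw [Matrix.isUnit_iff_isUnit_det]
    have : S.det * T.det = 1 := by rw [← det_mul, hST, det_one]
    exact IsUnit.of_mul_eq_one _ this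
  have hSinv : S⁻¹ = T := Matrix.inv_eq_right_inv hST
  have hVdetu : IsUnit V.det := by
    have : V.det * Vᵀ.det = 1 := by rw [← det_mul, hV2, det_one]
    exact IsUnit.of_mul_eq_one _ this
  have hVinv : V⁻¹ = Vᵀ := Matrix.inv_eq_right_inv hV2
  have hσanti : ∀ i j : Fin n, i ≤ j → σ j ≤ σ i := fun i j hij =>
    Real.sqrt_le_sqrt (hτanti i j hij)
  refine ⟨S, hSunit, σ, hσanti, hσpos, ?_, ?_, ?_⟩
  · -- S * P * Sᵀ = diagonal σ
    have hSTr : Sᵀ = M⁻¹ * (V * diagonal s) := by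
      rw [hSdef, transpose_mul, transpose_mul, transpose_transpose, diagonal_transpose,
        Matrix.transpose_nonsing_inv, hMT]
    rw [hSTr, hSdef, ← hMM]
    simp only [← mul_assoc]
    rw [mul_assoc (diagonal s * Vᵀ) M⁻¹ M, hMinv', mul_one,
      mul_assoc (diagonal s * Vᵀ) M M⁻¹, hMinv, mul_one, mul_assoc (diagonal s) Vᵀ V, hV1,
      mul_one, diagonal_mul_diagonal]
    exact congrArg _ (funext hss)
  · -- (Sᵀ)⁻¹ * Q * S⁻¹ = diagonal σ
    have key : diagonal s' * (Vᵀ * (M * Q * M) * V) * diagonal s' = diagonal σ := by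
      rw [← hAdef, hVAV, diagonal_mul_diagonal, diagonal_mul_diagonal]
      refine congrArg _ (funext fun i => ?_)
      show s' i * τ i * s' i = σ i
      have hs0 : s i ≠ 0 := (hspos i).ne'
      rw [hs'def, ← hσσ i, ← hss i]
      field_simp
    rw [← Matrix.transpose_nonsing_inv, hSinv, hTdef]
    rw [transpose_mul, transpose_mul, diagonal_transpose, hMT]
    rw [← key]
    simp only [mul_assoc]
  · -- charpoly
    have hPQ : P * Q = M * A * M⁻¹ := by
      rw [hAdef, ← hMM]
      simp only [← mul_assoc]
      rw [mul_assoc (M * M * Q) M M⁻¹, hMinv, mul_one]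
    have hADτ : A = V * diagonal τ * V⁻¹ := by rw [hVinv]; exact hAVV
    rw [hPQ, my_charpoly_conj M A hMdet, hADτ, my_charpoly_conj V (diagonal τ) hVdetu,
      my_charpoly_diagonal]
    refine Finset.prod_congr rfl fun i _ => ?_
    rw [hσdef]
    rw [Real.sq_sqrt (hτpos i).le]
end

section
/- Let A, N_1, …, N_q ∈ ℝ^{n×n}, B ∈ ℝ^{n×m}, C ∈ ℝ^{p×n}, and let K = (k_{ij}) ∈ ℝ^{q×q} be symmetric positive semidefinite. Let Σ be a symmetric positive definite matrix satisfying AᵀΣ + ΣA + Σ_{i,j=1}^q N_iᵀ Σ N_j k_{ij} + CᵀC − ΣBBᵀΣ = 0 and AᵀΣ⁻¹ + Σ⁻¹A + Σ_{i,j=1}^q N_iᵀ Σ⁻¹ N_j k_{ij} − CᵀC + Σ⁻¹BBᵀΣ⁻¹ ⪯ 0. Set Ā = A − BBᵀΣ and Υ = (Σ + Σ⁻¹)⁻¹. Then the following two inequalities hold: ĀᵀΥ⁻¹ + Υ⁻¹Ā + Σ_{i,j=1}^q N_iᵀ Υ⁻¹ N_j k_{ij} ⪯ −Υ⁻¹BBᵀΥ⁻¹,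 and ĀᵀΣ + ΣĀ + Σ_{i,j=1}^q N_iᵀ Σ N_j k_{ij} ⪯ −CᵀC − ΣBBᵀΣ. In other words, Υ and Σ are (unbalanced) type-II Gramians of the closed-loop system with coefficients (A − BBᵀΣ, N_i, B, [−BᵀΣ; C]). -/
open Matrix BigOperators

/-- `Υ = (Σ + Σ⁻¹)⁻¹` and `Σ` are (unbalanced) type-II Gramians of the
closed-loop system `(A − BBᵀΣ, N_i, B, [−BᵀΣ; C])`. -/
theorem stmt_10 {n m p q : ℕ}
    (A : Matrix (Fin n) (Fin n) ℝ) (N : Fin q → Matrix (Fin n) (Fin n) ℝ)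
    (B : Matrix (Fin n) (Fin m) ℝ) (C : Matrix (Fin p) (Fin n) ℝ)
    (K : Matrix (Fin q) (Fin q) ℝ) (hK : K.PosSemidef)
    (S : Matrix (Fin n) (Fin n) ℝ) (hS : S.PosDef)
    (hric : Aᵀ * S + S * A + (∑ i : Fin q, ∑ j : Fin q, K i j • ((N i)ᵀ * S * N j)) +
      Cᵀ * C - S * B * Bᵀ * S = 0)
    (hineq : (-(Aᵀ * S⁻¹ + S⁻¹ * A +
      (∑ i : Fin q, ∑ j : Fin q, K i j • ((N i)ᵀ * S⁻¹ * N j)) -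
      Cᵀ * C + S⁻¹ * B * Bᵀ * S⁻¹)).PosSemidef) :
    (-( ((S + S⁻¹)⁻¹)⁻¹ * B * Bᵀ * ((S + S⁻¹)⁻¹)⁻¹) -
      ((A - B * Bᵀ * S)ᵀ * ((S + S⁻¹)⁻¹)⁻¹ + ((S + S⁻¹)⁻¹)⁻¹ * (A - B * Bᵀ * S) +
        ∑ i : Fin q, ∑ j : Fin q,
          K i j • ((N i)ᵀ * ((S + S⁻¹)⁻¹)⁻¹ * N j))).PosSemidef ∧
    (-(Cᵀ * C) - S * B * Bᵀ * S -
      ((A - B * Bᵀ * S)ᵀ * S + S * (A - B * Bᵀ * S) +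
        ∑ i : Fin q, ∑ j : Fin q, K i j • ((N i)ᵀ * S * N j))).PosSemidef := by
  have hP : (S + S⁻¹).PosDef := hS.add hS.inv
  have hPinv : ((S + S⁻¹)⁻¹)⁻¹ = S + S⁻¹ :=
    Matrix.nonsing_inv_nonsing_inv _ (isUnit_iff_ne_zero.mpr hP.det_pos.ne')
  have hSt : Sᵀ = S := hS.isHermitian.eq
  have hSit : (S⁻¹)ᵀ = S⁻¹ := hS.inv.isHermitian.eq
  constructor
  · have key : (-( ((S + S⁻¹)⁻¹)⁻¹ * B * Bᵀ * ((S + S⁻¹)⁻¹)⁻¹) -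
      ((A - B * Bᵀ * S)ᵀ * ((S + S⁻¹)⁻¹)⁻¹ + ((S + S⁻¹)⁻¹)⁻¹ * (A - B * Bᵀ * S) +
        ∑ i : Fin q, ∑ j : Fin q,
          K i j • ((N i)ᵀ * ((S + S⁻¹)⁻¹)⁻¹ * N j))) =
      (-(Aᵀ * S⁻¹ + S⁻¹ * A +
        (∑ i : Fin q, ∑ j : Fin q, K i j • ((N i)ᵀ * S⁻¹ * N j)) -
        Cᵀ * C + S⁻¹ * B * Bᵀ * S⁻¹)) -
      (Aᵀ * S + S * A + (∑ i : Fin q, ∑ j : Fin q, K i j • ((N i)ᵀ * S * N j)) +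
        Cᵀ * C - S * B * Bᵀ * S) := by
      rw [hPinv]
      simp only [Matrix.transpose_sub, Matrix.transpose_mul, Matrix.transpose_transpose,
        hSt, hSit, Matrix.mul_add, Matrix.add_mul, Matrix.mul_sub, Matrix.sub_mul,
        Matrix.mul_assoc, smul_add, Finset.sum_add_distrib]
      abel
    rw [key, hric, sub_zero]
    exact hineq
  · have key : (-(Cᵀ * C) - S * B * Bᵀ * S -
      ((A - B * Bᵀ * S)ᵀ * S + S * (A - B * Bᵀ * S) +
        ∑ i : Fin q, ∑ j : Fin q, K i j • ((N i)ᵀ * S * N j))) =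
      -(Aᵀ * S + S * A + (∑ i : Fin q, ∑ j : Fin q, K i j • ((N i)ᵀ * S * N j)) +
        Cᵀ * C - S * B * Bᵀ * S) := by
      simp only [Matrix.transpose_sub, Matrix.transpose_mul, Matrix.transpose_transpose,
        hSt, Matrix.mul_add, Matrix.add_mul, Matrix.mul_sub, Matrix.sub_mul,
        Matrix.mul_assoc]
      abel
    rw [key, hric, neg_zero]
    exact Matrix.PosSemidef.zero
end

section
/- Let A, N_1, …, N_q ∈ ℝ^{n×n}, B ∈ ℝ^{n×m}, C ∈ ℝ^{p×n}, and let K = (k_{ij}) ∈ ℝ^{q×q} be symmetric positive semidefinite. Let Σ = diag(Σ_r, Σ_{2}) be a positive definite diagonal matrix, r < n, satisfying AᵀΣ + ΣA + Σ_{i,j=1}^q N_iᵀ Σ N_j k_{ij} + CᵀC − ΣBBᵀΣ = 0 and AᵀΣ⁻¹ + Σ⁻¹A + Σ_{i,j=1}^q N_iᵀ Σ⁻¹ N_j k_{ij} − CᵀC + Σ⁻¹BBᵀΣ⁻¹ ⪯ 0. Let A_r, N_{i,r} denote the leading r×r blocks of A and N_i, B_r the first r rows of B, and C_r the first r columns of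 C. Then the reduced quantities satisfy: A_rᵀΣ_r + Σ_rA_r + Σ_{i,j=1}^q N_{i,r}ᵀ Σ_r N_{j,r} k_{ij} + C_rᵀC_r − Σ_rB_rB_rᵀΣ_r ⪯ 0 and A_rᵀΣ_r⁻¹ + Σ_r⁻¹A_r + Σ_{i,j=1}^q N_{i,r}ᵀ Σ_r⁻¹ N_{j,r} k_{ij} − C_rᵀC_r + Σ_r⁻¹B_rB_rᵀΣ_r⁻¹ ⪯ 0. -/
open Matrix BigOperators

private lemma fin_sum_split {n r : ℕ} (h : r ≤ n) (f : Fin n → ℝ) :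
    ∑ k, f k = (∑ i : Fin r, f (Fin.castLE h i)) +
      ∑ j : Fin (n - r), f ⟨r + (j : ℕ), by omega⟩ := by
  rw [← Equiv.sum_comp (finSumFinEquiv.trans (finCongr (Nat.add_sub_cancel' h))) f,
    Fintype.sum_sum_type]
  congr 1

private lemma psd_sum {ι : Type*} {w : ℕ} (s : Finset ι) (f : ι → Matrix (Fin w) (Fin w) ℝ)
    (h : ∀ i ∈ s, (f i).PosSemidef) : (∑ i ∈ s, f i).PosSemidef := by
  classical
  induction s using Finset.induction with
  | empty => simpa using Matrix.PosSemidef.zero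
  | insert _ _ hx ih =>
    rw [Finset.sum_insert hx]
    exact (h _ (Finset.mem_insert_self _ _)).add (ih fun i hi => h i (Finset.mem_insert_of_mem hi))

private lemma gram_psd {q t s : ℕ} {K : Matrix (Fin q) (Fin q) ℝ} (hK : K.PosSemidef)
    (d : Fin t → ℝ) (hd : ∀ k, 0 ≤ d k) (P : Fin q → Matrix (Fin t) (Fin s) ℝ) :
    (∑ i : Fin q, ∑ j : Fin q, K i j • ((P i)ᵀ * Matrix.diagonal d * P j)).PosSemidef := by
  obtain ⟨Lm, hLm⟩ : ∃ Lm : Matrix (Fin q) (Fin q) ℝ, K = star Lm * Lm := by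
    open scoped MatrixOrder Matrix.Norms.L2Operator in
    exact CStarAlgebra.nonneg_iff_eq_star_mul_self.mp hK.nonneg
  set F := Matrix.diagonal (fun k => Real.sqrt (d k)) with hFdef
  have hF : Fᵀ * F = Matrix.diagonal d := by
    rw [hFdef, diagonal_transpose, diagonal_mul_diagonal]
    exact congrArg _ (funext fun k => Real.mul_self_sqrt (hd k))
  have hKij : ∀ i j, K i j = ∑ c, Lm c i * Lm c j := by
    intro i j
    rw [hLm]
    simp [Matrix.mul_apply, conjTranspose_apply]
  have this1 : ∀ c : Fin q, (∑ i, Lm c i • (F * P i))ᵀ * (∑ j, Lm c j • (F * P j))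
      = ∑ i, ∑ j, (Lm c i * Lm c j) • ((P i)ᵀ * Matrix.diagonal d * P j) := by
    intro c
    rw [transpose_sum, Matrix.sum_mul]
    refine Finset.sum_congr rfl fun i _ => ?_
    rw [Matrix.mul_sum]
    refine Finset.sum_congr rfl fun j _ => ?_
    rw [transpose_smul, Matrix.smul_mul, Matrix.mul_smul, smul_smul, transpose_mul]
    congr 1
    rw [Matrix.mul_assoc, ← Matrix.mul_assoc Fᵀ, hF, ← Matrix.mul_assoc]
  have key : (∑ i : Fin q, ∑ j : Fin q, K i j • ((P i)ᵀ * Matrix.diagonal d * P j))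
      = ∑ c : Fin q, (∑ i, Lm c i • (F * P i))ᵀ * (∑ j, Lm c j • (F * P j)) := by
    symm
    calc ∑ c : Fin q, (∑ i, Lm c i • (F * P i))ᵀ * (∑ j, Lm c j • (F * P j))
        = ∑ c, ∑ i, ∑ j, (Lm c i * Lm c j) • ((P i)ᵀ * Matrix.diagonal d * P j) :=
          Finset.sum_congr rfl fun c _ => this1 c
      _ = ∑ i, ∑ c, ∑ j, (Lm c i * Lm c j) • ((P i)ᵀ * Matrix.diagonal d * P j) :=
          Finset.sum_comm
      _ = ∑ i, ∑ j, ∑ c, (Lm c i * Lm c j) • ((P i)ᵀ * Matrix.diagonal d * P j) :=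
          Finset.sum_congr rfl fun i _ => Finset.sum_comm
      _ = ∑ i : Fin q, ∑ j : Fin q, K i j • ((P i)ᵀ * Matrix.diagonal d * P j) := by
          refine Finset.sum_congr rfl fun i _ => Finset.sum_congr rfl fun j _ => ?_
          rw [← Finset.sum_smul, ← hKij]
  rw [key]
  refine psd_sum _ _ fun c _ => ?_
  have h2 := Matrix.posSemidef_conjTranspose_mul_self (∑ j, Lm c j • (F * P j))
  rwa [conjTranspose_eq_transpose_of_trivial] at h2

private lemma mulform {t s : ℕ} (X Y : Matrix (Fin t) (Fin s) ℝ) (d : Fin t → ℝ)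
    (u v : Fin s) :
    (Xᵀ * Matrix.diagonal d * Y) u v = ∑ k, X k u * d k * Y k v := by
  rw [Matrix.mul_apply]
  exact Finset.sum_congr rfl fun k _ => by rw [Matrix.mul_diagonal, Matrix.transpose_apply]

/-- Truncation of a balanced realization: the leading blocks satisfy the reduced
Riccati inequalities with the leading block of the balanced Gramian. -/
theorem stmt_11 {n m p q r : ℕ} (hr : r < n)
    (A : Matrix (Fin n) (Fin n) ℝ) (N : Fin q → Matrix (Fin n) (Fin n) ℝ)
    (B : Matrix (Fin n) (Fin m) ℝ) (C : Matrix (Fin p) (Fin n) ℝ)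
    (K : Matrix (Fin q) (Fin q) ℝ) (hK : K.PosSemidef)
    (σ : Fin n → ℝ) (hσpos : ∀ i, 0 < σ i)
    (hric : Aᵀ * Matrix.diagonal σ + Matrix.diagonal σ * A +
      (∑ i : Fin q, ∑ j : Fin q, K i j • ((N i)ᵀ * Matrix.diagonal σ * N j)) +
      Cᵀ * C - Matrix.diagonal σ * B * Bᵀ * Matrix.diagonal σ = 0)
    (hineq : (-(Aᵀ * (Matrix.diagonal σ)⁻¹ + (Matrix.diagonal σ)⁻¹ * A +
      (∑ i : Fin q, ∑ j : Fin q, K i j • ((N i)ᵀ * (Matrix.diagonal σ)⁻¹ * N j)) -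
      Cᵀ * C + (Matrix.diagonal σ)⁻¹ * B * Bᵀ * (Matrix.diagonal σ)⁻¹)).PosSemidef) :
    (-(((A.submatrix (Fin.castLE hr.le) (Fin.castLE hr.le))ᵀ *
        Matrix.diagonal (σ ∘ Fin.castLE hr.le) +
      Matrix.diagonal (σ ∘ Fin.castLE hr.le) *
        A.submatrix (Fin.castLE hr.le) (Fin.castLE hr.le) +
      (∑ i : Fin q, ∑ j : Fin q,
        K i j • (((N i).submatrix (Fin.castLE hr.le) (Fin.castLE hr.le))ᵀ *
          Matrix.diagonal (σ ∘ Fin.castLE hr.le) *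
          (N j).submatrix (Fin.castLE hr.le) (Fin.castLE hr.le))) +
      (C.submatrix id (Fin.castLE hr.le))ᵀ * C.submatrix id (Fin.castLE hr.le) -
      Matrix.diagonal (σ ∘ Fin.castLE hr.le) * B.submatrix (Fin.castLE hr.le) id *
        (B.submatrix (Fin.castLE hr.le) id)ᵀ *
        Matrix.diagonal (σ ∘ Fin.castLE hr.le)))).PosSemidef ∧
    (-(((A.submatrix (Fin.castLE hr.le) (Fin.castLE hr.le))ᵀ *
        (Matrix.diagonal (σ ∘ Fin.castLE hr.le))⁻¹ +
      (Matrix.diagonal (σ ∘ Fin.castLE hr.le))⁻¹ *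
        A.submatrix (Fin.castLE hr.le) (Fin.castLE hr.le) +
      (∑ i : Fin q, ∑ j : Fin q,
        K i j • (((N i).submatrix (Fin.castLE hr.le) (Fin.castLE hr.le))ᵀ *
          (Matrix.diagonal (σ ∘ Fin.castLE hr.le))⁻¹ *
          (N j).submatrix (Fin.castLE hr.le) (Fin.castLE hr.le))) -
      (C.submatrix id (Fin.castLE hr.le))ᵀ * C.submatrix id (Fin.castLE hr.le) +
      (Matrix.diagonal (σ ∘ Fin.castLE hr.le))⁻¹ * B.submatrix (Fin.castLE hr.le) id *
        (B.submatrix (Fin.castLE hr.le) id)ᵀ *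
        (Matrix.diagonal (σ ∘ Fin.castLE hr.le))⁻¹))).PosSemidef := by
  set L : Fin r → Fin n := Fin.castLE hr.le with hLdef
  set G : Fin (n - r) → Fin n := fun j => ⟨r + (j : ℕ), by omega⟩ with hGdef
  have hTd : ∀ (d : Fin n → ℝ) (X : Matrix (Fin n) (Fin n) ℝ),
      (Xᵀ * Matrix.diagonal d).submatrix L L
        = (X.submatrix L L)ᵀ * Matrix.diagonal (d ∘ L) := by
    intro d X; ext a b; simp [Matrix.mul_diagonal]
  have hDd : ∀ (d : Fin n → ℝ) (X : Matrix (Fin n) (Fin n) ℝ),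
      (Matrix.diagonal d * X).submatrix L L
        = Matrix.diagonal (d ∘ L) * X.submatrix L L := by
    intro d X; ext a b; simp [Matrix.diagonal_mul]
  have hNd : ∀ (d : Fin n → ℝ) (X Y : Matrix (Fin n) (Fin n) ℝ),
      (Xᵀ * Matrix.diagonal d * Y).submatrix L L
        = (X.submatrix L L)ᵀ * Matrix.diagonal (d ∘ L) * (Y.submatrix L L)
          + (X.submatrix G L)ᵀ * Matrix.diagonal (d ∘ G) * (Y.submatrix G L) := by
    intro d X Y
    ext a b
    rw [Matrix.submatrix_apply, mulform, Matrix.add_apply, mulform, mulform,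
      fin_sum_split hr.le (fun k => X k (L a) * d k * Y k (L b))]
    rfl
  have hSum : ∀ (d : Fin n → ℝ),
      (∑ i : Fin q, ∑ j : Fin q, K i j • ((N i)ᵀ * Matrix.diagonal d * N j)).submatrix L L
        = (∑ i : Fin q, ∑ j : Fin q, K i j • (((N i).submatrix L L)ᵀ *
            Matrix.diagonal (d ∘ L) * (N j).submatrix L L))
          + (∑ i : Fin q, ∑ j : Fin q, K i j • (((N i).submatrix G L)ᵀ *
            Matrix.diagonal (d ∘ G) * (N j).submatrix G L)) := by
    intro d
    have h0 : (∑ i : Fin q, ∑ j : Fin q, K i j • ((N i)ᵀ * Matrix.diagonal d * N j)).submatrix L L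
        = ∑ i : Fin q, ∑ j : Fin q, K i j • (((N i)ᵀ * Matrix.diagonal d * N j).submatrix L L) := by
      ext a b; simp [Matrix.sum_apply]
    rw [h0,
      Finset.sum_congr rfl fun i _ => Finset.sum_congr rfl fun j _ => by
        rw [hNd d (N i) (N j), smul_add]]
    simp only [Finset.sum_add_distrib]
  have hCC : (Cᵀ * C).submatrix L L = (C.submatrix id L)ᵀ * C.submatrix id L := by
    ext a b; simp [Matrix.mul_apply]
  have hBBt : (B * Bᵀ).submatrix L L = B.submatrix L id * (B.submatrix L id)ᵀ := by
    ext a b; simp [Matrix.mul_apply]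
  have hBB : ∀ (d : Fin n → ℝ),
      (Matrix.diagonal d * B * Bᵀ * Matrix.diagonal d).submatrix L L
        = Matrix.diagonal (d ∘ L) * B.submatrix L id * (B.submatrix L id)ᵀ *
            Matrix.diagonal (d ∘ L) := by
    intro d
    rw [Matrix.mul_assoc (Matrix.diagonal d) B Bᵀ]
    have hDMD : (Matrix.diagonal d * (B * Bᵀ) * Matrix.diagonal d).submatrix L L
        = Matrix.diagonal (d ∘ L) * ((B * Bᵀ).submatrix L L) * Matrix.diagonal (d ∘ L) := by
      ext a b; simp [Matrix.mul_diagonal, Matrix.diagonal_mul]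
    rw [hDMD, hBBt, ← Matrix.mul_assoc]
  set τ : Fin n → ℝ := fun i => (σ i)⁻¹ with hτdef
  have hinv1 : (Matrix.diagonal σ)⁻¹ = Matrix.diagonal τ := by
    apply Matrix.inv_eq_right_inv
    rw [Matrix.diagonal_mul_diagonal, ← Matrix.diagonal_one]
    exact congrArg _ (funext fun i => mul_inv_cancel₀ (hσpos i).ne')
  have hinv2 : (Matrix.diagonal (σ ∘ L))⁻¹ = Matrix.diagonal (τ ∘ L) := by
    apply Matrix.inv_eq_right_inv
    rw [Matrix.diagonal_mul_diagonal, ← Matrix.diagonal_one]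
    exact congrArg _ (funext fun i => mul_inv_cancel₀ (hσpos (L i)).ne')
  constructor
  · have main1 := congrArg (fun M : Matrix (Fin n) (Fin n) ℝ => M.submatrix L L) hric
    simp only [Matrix.submatrix_add, Matrix.submatrix_sub, Matrix.submatrix_zero,
      Pi.add_apply, Pi.sub_apply, Pi.zero_apply] at main1
    rw [hTd σ A, hDd σ A, hSum σ, hCC, hBB σ] at main1
    have main1' :
        -((A.submatrix L L)ᵀ * Matrix.diagonal (σ ∘ L) +
          Matrix.diagonal (σ ∘ L) * A.submatrix L L +
          (∑ i : Fin q, ∑ j : Fin q, K i j • (((N i).submatrix L L)ᵀ *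
            Matrix.diagonal (σ ∘ L) * (N j).submatrix L L)) +
          (C.submatrix id L)ᵀ * C.submatrix id L -
          Matrix.diagonal (σ ∘ L) * B.submatrix L id * (B.submatrix L id)ᵀ *
            Matrix.diagonal (σ ∘ L))
        = ∑ i : Fin q, ∑ j : Fin q, K i j • (((N i).submatrix G L)ᵀ *
            Matrix.diagonal (σ ∘ G) * (N j).submatrix G L) := by
      rw [neg_eq_iff_add_eq_zero, ← main1]
      abel
    rw [main1']
    exact gram_psd hK (σ ∘ G) (fun k => (hσpos _).le) _
  · rw [hinv1] at hineq
    rw [hinv2]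
    have h2 := hineq.submatrix L
    have main2 :
        (Aᵀ * Matrix.diagonal τ + Matrix.diagonal τ * A +
          (∑ i : Fin q, ∑ j : Fin q, K i j • ((N i)ᵀ * Matrix.diagonal τ * N j)) -
          Cᵀ * C + Matrix.diagonal τ * B * Bᵀ * Matrix.diagonal τ).submatrix L L
        = ((A.submatrix L L)ᵀ * Matrix.diagonal (τ ∘ L) +
            Matrix.diagonal (τ ∘ L) * A.submatrix L L +
            (∑ i : Fin q, ∑ j : Fin q, K i j • (((N i).submatrix L L)ᵀ *
              Matrix.diagonal (τ ∘ L) * (N j).submatrix L L)) -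
            (C.submatrix id L)ᵀ * C.submatrix id L +
            Matrix.diagonal (τ ∘ L) * B.submatrix L id * (B.submatrix L id)ᵀ *
              Matrix.diagonal (τ ∘ L))
          + (∑ i : Fin q, ∑ j : Fin q, K i j • (((N i).submatrix G L)ᵀ *
              Matrix.diagonal (τ ∘ G) * (N j).submatrix G L)) := by
      simp only [Matrix.submatrix_add, Matrix.submatrix_sub, Pi.add_apply, Pi.sub_apply]
      rw [hTd τ A, hDd τ A, hSum τ, hCC, hBB τ]
      abel
    have key2 :
        -((A.submatrix L L)ᵀ * Matrix.diagonal (τ ∘ L) +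
            Matrix.diagonal (τ ∘ L) * A.submatrix L L +
            (∑ i : Fin q, ∑ j : Fin q, K i j • (((N i).submatrix L L)ᵀ *
              Matrix.diagonal (τ ∘ L) * (N j).submatrix L L)) -
            (C.submatrix id L)ᵀ * C.submatrix id L +
            Matrix.diagonal (τ ∘ L) * B.submatrix L id * (B.submatrix L id)ᵀ *
              Matrix.diagonal (τ ∘ L))
        = (-(Aᵀ * Matrix.diagonal τ + Matrix.diagonal τ * A +
            (∑ i : Fin q, ∑ j : Fin q, K i j • ((N i)ᵀ * Matrix.diagonal τ * N j)) -
            Cᵀ * C + Matrix.diagonal τ * B * Bᵀ * Matrix.diagonal τ)).submatrix L L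
          + (∑ i : Fin q, ∑ j : Fin q, K i j • (((N i).submatrix G L)ᵀ *
              Matrix.diagonal (τ ∘ G) * (N j).submatrix G L)) := by
      simp only [Matrix.submatrix_neg, Pi.neg_apply]
      rw [main2]
      abel
    rw [key2]
    exact h2.add (gram_psd hK (τ ∘ G) (fun k => inv_nonneg.mpr (hσpos _).le) _)
end

section
/- Let A, N_1, …, N_q ∈ ℝ^{n×n} and let K = (k_{ij}) ∈ ℝ^{q×q} be symmetric positive semidefinite. Suppose there exists a symmetric positive definite X with AᵀX + XA + Σ_{i,j=1}^q N_iᵀ X N_j k_{ij} ≺ 0. Then there is no real λ ≥ 0 and no symmetric positive semidefinite V ≠ 0 such that A V + V Aᵀ + Σ_{i,j=1}^q N_i V N_jᵀ k_{ij} = λV. -/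
open Matrix BigOperators

section sqrtCompat
open scoped MatrixOrder

noncomputable def Matrix.PosSemidef.sqrt {m : ℕ} {V : Matrix (Fin m) (Fin m) ℝ}
    (_hV : V.PosSemidef) : Matrix (Fin m) (Fin m) ℝ := CFC.sqrt V

lemma Matrix.PosSemidef.sqrt_mul_self {m : ℕ} {V : Matrix (Fin m) (Fin m) ℝ}
    (hV : V.PosSemidef) : hV.sqrt * hV.sqrt = V :=
  CFC.sqrt_mul_sqrt_self V hV.nonneg

lemma Matrix.PosSemidef.posSemidef_sqrt {m : ℕ} {V : Matrix (Fin m) (Fin m) ℝ}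
    (hV : V.PosSemidef) : hV.sqrt.PosSemidef :=
  (CFC.sqrt_nonneg V).posSemidef

end sqrtCompat

lemma conj_trace_eq {m : ℕ} (P B : Matrix (Fin m) (Fin m) ℝ) :
    (Bᵀ * P * B).trace = ∑ j, (fun i => B i j) ⬝ᵥ P *ᵥ (fun i => B i j) := by
  simp only [Matrix.trace, Matrix.diag, Matrix.mul_apply, Matrix.mulVec, dotProduct,
    Matrix.transpose_apply, Finset.sum_mul, Finset.mul_sum]
  refine Finset.sum_congr rfl fun j _ => ?_
  rw [Finset.sum_comm]
  refine Finset.sum_congr rfl fun i _ => Finset.sum_congr rfl fun k _ => by ring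

lemma trace_conj_rewrite {m : ℕ} (P V : Matrix (Fin m) (Fin m) ℝ) (hV : V.PosSemidef) :
    (P * V).trace = ∑ j, (fun i => hV.sqrt i j) ⬝ᵥ P *ᵥ (fun i => hV.sqrt i j) := by
  set B := hV.sqrt with hBdef
  have hBB : B * B = V := hV.sqrt_mul_self
  have hBt : Bᵀ = B := by
    have := hV.posSemidef_sqrt.1
    rwa [Matrix.IsHermitian, Matrix.conjTranspose_eq_transpose_of_trivial] at this
  have h1 : (Bᵀ * P * B).trace = (P * V).trace := by
    calc (Bᵀ * P * B).trace = ((B * B) * P).trace := by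
          rw [hBt]; exact Matrix.trace_mul_cycle B P B
      _ = (P * V).trace := by rw [hBB, Matrix.trace_mul_comm]
  rw [← h1, conj_trace_eq]

lemma trace_mul_pos_of_posDef_posSemidef {m : ℕ} {P V : Matrix (Fin m) (Fin m) ℝ}
    (hP : P.PosDef) (hV : V.PosSemidef) (hVne : V ≠ 0) : 0 < (P * V).trace := by
  rw [trace_conj_rewrite P V hV]
  set B := hV.sqrt with hBdef
  have hBB : B * B = V := hV.sqrt_mul_self
  have hBne : B ≠ 0 := by
    intro h; apply hVne; rw [← hBB, h, Matrix.mul_zero]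
  obtain ⟨i0, j0, hij⟩ : ∃ i j, B i j ≠ 0 := by
    by_contra h
    push_neg at h
    exact hBne (by ext i j; exact h i j)
  refine Finset.sum_pos' (fun j _ => ?_) ⟨j0, Finset.mem_univ _, ?_⟩
  · rcases eq_or_ne (fun i => B i j) 0 with h | h
    · simp [h]
    · exact le_of_lt (by simpa using hP.dotProduct_mulVec_pos h)
  · have hne : (fun i => B i j0) ≠ 0 := fun h => hij (congrFun h i0)
    simpa using hP.dotProduct_mulVec_pos hne

lemma trace_mul_nonneg_of_posSemidef {m : ℕ} {P V : Matrix (Fin m) (Fin m) ℝ}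
    (hP : P.PosSemidef) (hV : V.PosSemidef) : 0 ≤ (P * V).trace := by
  rw [trace_conj_rewrite P V hV]
  exact Finset.sum_nonneg fun j _ => by simpa using hP.dotProduct_mulVec_nonneg (fun i => hV.sqrt i j)

/-- Mean square asymptotic stability (Lyapunov form) excludes nonnegative
eigenvalues of the adjoint generalized Lyapunov operator with nonzero positive
semidefinite eigenvectors. -/
theorem stmt_14 {n q : ℕ}
    (A : Matrix (Fin n) (Fin n) ℝ) (N : Fin q → Matrix (Fin n) (Fin n) ℝ)
    (K : Matrix (Fin q) (Fin q) ℝ) (hK : K.PosSemidef)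
    (hstable : ∃ X : Matrix (Fin n) (Fin n) ℝ, X.PosDef ∧
      (-(Aᵀ * X + X * A + ∑ i : Fin q, ∑ j : Fin q, K i j • ((N i)ᵀ * X * N j))).PosDef) :
    ¬ ∃ l : ℝ, 0 ≤ l ∧ ∃ V : Matrix (Fin n) (Fin n) ℝ, V.PosSemidef ∧ V ≠ 0 ∧
      A * V + V * Aᵀ + ∑ i : Fin q, ∑ j : Fin q, K i j • (N i * V * (N j)ᵀ) = l • V := by
  rintro ⟨l, hl, V, hV, hVne, heq⟩
  obtain ⟨X, hX, hM⟩ := hstable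
  set M : Matrix (Fin n) (Fin n) ℝ :=
    Aᵀ * X + X * A + ∑ i : Fin q, ∑ j : Fin q, K i j • ((N i)ᵀ * X * N j) with hMdef
  have hKsym : ∀ i j, K i j = K j i := fun i j => by
    have := congrFun (congrFun hK.1 i) j
    simpa [Matrix.conjTranspose_apply] using this.symm
  have e3' : ∀ i j : Fin q, ((N j)ᵀ * X * N i * V).trace = (X * (N i * V * (N j)ᵀ)).trace := by
    intro i j
    calc ((N j)ᵀ * X * N i * V).trace
        = ((N j)ᵀ * X * (N i * V)).trace := by rw [Matrix.mul_assoc ((N j)ᵀ * X)]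
      _ = (X * (N i * V) * (N j)ᵀ).trace := (Matrix.trace_mul_cycle X (N i * V) ((N j)ᵀ)).symm
      _ = (X * (N i * V * (N j)ᵀ)).trace := by rw [Matrix.mul_assoc]
  -- key trace identity
  have key : (M * V).trace
      = (X * (A * V + V * Aᵀ + ∑ i : Fin q, ∑ j : Fin q, K i j • (N i * V * (N j)ᵀ))).trace := by
    rw [hMdef]
    rw [Matrix.add_mul, Matrix.add_mul, Matrix.mul_add, Matrix.mul_add,
      Matrix.trace_add, Matrix.trace_add, Matrix.trace_add, Matrix.trace_add]
    have e1 : (Aᵀ * X * V).trace = (X * (V * Aᵀ)).trace := by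
      calc (Aᵀ * X * V).trace = (V * Aᵀ * X).trace := Matrix.trace_mul_cycle Aᵀ X V
        _ = (X * (V * Aᵀ)).trace := Matrix.trace_mul_comm (V * Aᵀ) X
    have e2 : (X * A * V).trace = (X * (A * V)).trace := by rw [Matrix.mul_assoc]
    have e3 : ((∑ i : Fin q, ∑ j : Fin q, K i j • ((N i)ᵀ * X * N j)) * V).trace
        = (X * ∑ i : Fin q, ∑ j : Fin q, K i j • (N i * V * (N j)ᵀ)).trace := by
      simp only [Matrix.sum_mul, Matrix.mul_sum, Matrix.trace_sum, Matrix.smul_mul,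
        Matrix.mul_smul, Matrix.trace_smul, smul_eq_mul]
      calc ∑ i, ∑ j, K i j * ((N i)ᵀ * X * N j * V).trace
          = ∑ i, ∑ j, K i j * (X * (N j * V * (N i)ᵀ)).trace := by
            exact Finset.sum_congr rfl fun i _ => Finset.sum_congr rfl fun j _ => by rw [e3' j i]
        _ = ∑ j, ∑ i, K i j * (X * (N j * V * (N i)ᵀ)).trace := Finset.sum_comm
        _ = ∑ i, ∑ j, K i j * (X * (N i * V * (N j)ᵀ)).trace := by
            exact Finset.sum_congr rfl fun i _ => Finset.sum_congr rfl fun j _ => by rw [hKsym]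
    rw [e1, e2, e3]
    ring
  have h1 : (M * V).trace = l * (X * V).trace := by
    rw [key, heq, Matrix.mul_smul, Matrix.trace_smul, smul_eq_mul]
  have h2 : 0 ≤ l * (X * V).trace :=
    mul_nonneg hl (trace_mul_nonneg_of_posSemidef hX.posSemidef hV)
  have h3 : 0 < ((-M) * V).trace := trace_mul_pos_of_posDef_posSemidef hM hV hVne
  rw [Matrix.neg_mul, Matrix.trace_neg] at h3
  linarith
end

section
/- Let A, N_1, …, N_q ∈ ℝ^{n×n}, C ∈ ℝ^{p×n}, and let K = (k_{ij}) ∈ ℝ^{q×q} be symmetric positive semidefinite. Suppose there exists a symmetric positive definite X with AᵀX + XA + Σ_{i,j=1}^q N_iᵀ X N_j k_{ij} − CᵀC ≺ 0 (the algebraic characterization of stabilizability of (Aᵀ, Cᵀ, N_iᵀ)). Then the triple (A, C, N_i) is detectable in the Hautus sense: for every real λ ≥ 0 and every symmetric positive semidefinite V ≠ 0 with A V + V Aᵀ + Σ_{i,j=1}^q N_i V N_jᵀ k_{ij} = λV, one has CV ≠ 0. -/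
open Matrix BigOperators

open scoped MatrixOrder in
private lemma aux_trace_pos {n : ℕ} {M V : Matrix (Fin n) (Fin n) ℝ}
    (hM : M.PosDef) (hV : V.PosSemidef) (hV0 : V ≠ 0) : 0 < (M * V).trace := by
  set S := CFC.sqrt V with hS
  have hSH : Sᵀ = S := by
    have h := (CFC.sqrt_nonneg V).posSemidef.1
    rwa [IsHermitian, conjTranspose_eq_transpose_of_trivial] at h
  have hsym : ∀ a b, S a b = S b a := by
    intro a b
    conv_lhs => rw [← hSH]
    rfl
  have hSS : S * S = V := CFC.sqrt_mul_sqrt_self V hV.nonneg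
  have hS0 : S ≠ 0 := by
    intro h
    apply hV0
    rw [← hSS, h, mul_zero]
  have htr : (M * V).trace = (S * M * S).trace := by
    rw [← hSS, ← mul_assoc, trace_mul_comm, ← mul_assoc]
  rw [htr, trace]
  have hdiag : ∀ i, (S * M * S).diag i =
      star (fun k => S k i) ⬝ᵥ M *ᵥ (fun k => S k i) := by
    intro i
    simp only [diag, mul_apply, dotProduct, mulVec, dotProduct, Pi.star_apply,
      star_trivial, Finset.sum_mul, Finset.mul_sum]
    rw [Finset.sum_comm]
    apply Finset.sum_congr rfl
    intro a _
    apply Finset.sum_congr rfl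
    intro b _
    rw [hsym i a]
    ring
  have hnon : ∀ i ∈ Finset.univ, (0:ℝ) ≤ (S * M * S).diag i := by
    intro i _
    rw [hdiag i]
    rcases eq_or_ne (fun k => S k i) 0 with h | h
    · rw [h]; simp
    · exact le_of_lt (hM.dotProduct_mulVec_pos h)
  have hex : ∃ i ∈ Finset.univ, (0:ℝ) < (S * M * S).diag i := by
    have : ∃ i, (fun k => S k i) ≠ 0 := by
      by_contra h
      push_neg at h
      apply hS0
      ext a b
      have := congrFun (h b) a
      simpa using this
    obtain ⟨i, hi⟩ := this
    exact ⟨i, Finset.mem_univ i, by rw [hdiag i]; exact hM.dotProduct_mulVec_pos hi⟩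
  exact Finset.sum_pos' hnon hex

/-- Stabilizability of the dual triple `(Aᵀ, Cᵀ, N_iᵀ)` (algebraic form) implies
detectability of `(A, C, N_i)` in the Hautus sense. -/
theorem stmt_15 {n p q : ℕ}
    (A : Matrix (Fin n) (Fin n) ℝ) (N : Fin q → Matrix (Fin n) (Fin n) ℝ)
    (C : Matrix (Fin p) (Fin n) ℝ)
    (K : Matrix (Fin q) (Fin q) ℝ) (hK : K.PosSemidef)
    (hstab : ∃ X : Matrix (Fin n) (Fin n) ℝ, X.PosDef ∧
      (-(Aᵀ * X + X * A + (∑ i : Fin q, ∑ j : Fin q, K i j • ((N i)ᵀ * X * N j)) -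
        Cᵀ * C)).PosDef) :
    ∀ l : ℝ, 0 ≤ l → ∀ V : Matrix (Fin n) (Fin n) ℝ, V.PosSemidef → V ≠ 0 →
      A * V + V * Aᵀ + ∑ i : Fin q, ∑ j : Fin q, K i j • (N i * V * (N j)ᵀ) = l • V →
      C * V ≠ 0 := by
  obtain ⟨X, hX, hM⟩ := hstab
  intro l hl V hV hV0 heq hCV
  set M := -(Aᵀ * X + X * A + (∑ i : Fin q, ∑ j : Fin q, K i j • ((N i)ᵀ * X * N j)) -
    Cᵀ * C) with hMdef
  have hMV : 0 < (M * V).trace := aux_trace_pos hM hV hV0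
  have hXV : 0 < (X * V).trace := aux_trace_pos hX hV hV0
  have hCC : (Cᵀ * C * V).trace = 0 := by
    rw [Matrix.mul_assoc, hCV, Matrix.mul_zero, trace_zero]
  have hKsymm : ∀ i j, K i j = K j i := by
    intro i j
    have h := congrFun (congrFun hK.1 i) j
    simpa using h.symm
  -- trace(M*V) = -(l * trace(X*V)) + trace(CᵀC V)
  have key : (M * V).trace = -(l * (X * V).trace) + (Cᵀ * C * V).trace := by
    have h1 : (M * V).trace =
        -((Aᵀ * X * V).trace + (X * A * V).trace +
          (∑ i : Fin q, ∑ j : Fin q, K i j * ((N i)ᵀ * X * N j * V).trace))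
          + (Cᵀ * C * V).trace := by
      rw [hMdef]
      simp only [Matrix.neg_mul, Matrix.sub_mul, Matrix.add_mul, Matrix.sum_mul,
        Matrix.smul_mul, trace_neg, trace_sub, trace_add, trace_sum, trace_smul,
        smul_eq_mul]
      ring
    have h2 : (X * (A * V + V * Aᵀ + ∑ i : Fin q, ∑ j : Fin q,
        K i j • (N i * V * (N j)ᵀ))).trace =
        (Aᵀ * X * V).trace + (X * A * V).trace +
          (∑ i : Fin q, ∑ j : Fin q, K i j * ((N i)ᵀ * X * N j * V).trace) := by
      simp only [Matrix.mul_add, Matrix.mul_sum, Matrix.mul_smul, trace_add, trace_sum,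
        trace_smul, smul_eq_mul]
      have e1 : (X * (A * V)).trace = (X * A * V).trace := by rw [Matrix.mul_assoc]
      have e2 : (X * (V * Aᵀ)).trace = (Aᵀ * X * V).trace := by
        rw [← Matrix.mul_assoc]
        exact trace_mul_cycle X V Aᵀ
      have e3 : ∀ i j : Fin q, (X * (N i * V * (N j)ᵀ)).trace =
          ((N j)ᵀ * X * N i * V).trace := by
        intro i j
        rw [← Matrix.mul_assoc, ← Matrix.mul_assoc, trace_mul_comm,
          ← Matrix.mul_assoc, ← Matrix.mul_assoc]
      have e4 : ∑ i : Fin q, ∑ j : Fin q, K i j * (X * (N i * V * (N j)ᵀ)).trace =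
          ∑ i : Fin q, ∑ j : Fin q, K i j * ((N i)ᵀ * X * N j * V).trace := by
        simp_rw [e3]
        rw [Finset.sum_comm]
        apply Finset.sum_congr rfl
        intro i _
        apply Finset.sum_congr rfl
        intro j _
        rw [hKsymm j i]
      rw [e1, e2, e4]
      ring
    have h3 : (X * (l • V)).trace = l * (X * V).trace := by
      rw [Matrix.mul_smul, trace_smul, smul_eq_mul]
    rw [h1, ← h2, heq, h3]
  rw [key, hCC, add_zero] at hMV
  have : 0 ≤ l * (X * V).trace := mul_nonneg hl (le_of_lt hXV)
  linarith
end
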